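/- arXiv:2004.08437 — 5 statements merged into one kernel-verified Lean document; each statement's English description precedes it below -/
import Mathlib

section
/- Let μ1, μ2, μ3, μ4 be nonzero real numbers. The point θ = (0, π/2, π, 3π/2) is a critical point of V (i.e. all four partial derivatives ∂V/∂θ_k vanish there) if and only if μ1 = μ3 and μ2 = μ4. (In other words, the (1+4)-gon configuration requires equal circulations on opposite corners of the square.) -/
open Real Polynomial

/-- The potential `V` for the (1+4)-vortex problem with circulation
parameters `μ` and angular positions `θ`. -/
noncomputable def V (μ θ : Fin 4 → ℝ) : ℝ :=
  -∑ i : Fin 4, ∑ j ∈ Finset.Ioi i,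
      μ i * μ j *
        (Real.cos (θ i - θ j) + (1 / 2) * Real.log (2 - 2 * Real.cos (θ i - θ j)))

/-- The partial derivative `∂V/∂θ_k` at the point `θ`. -/
noncomputable def partialV (μ θ : Fin 4 → ℝ) (k : Fin 4) : ℝ :=
  deriv (fun t => V μ (Function.update θ k t)) (θ k)

/-- `θ` is a critical point of `V`: all four partial derivatives vanish. -/
def IsCriticalPt (μ θ : Fin 4 → ℝ) : Prop :=
  ∀ k : Fin 4, partialV μ θ k = 0

/-- The Hessian matrix of `V` at `θ`, `H k l = ∂²V/∂θ_k ∂θ_l`. -/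
noncomputable def hessV (μ θ : Fin 4 → ℝ) : Matrix (Fin 4) (Fin 4) ℝ :=
  fun k l => deriv (fun t => partialV μ (Function.update θ k t) l) (θ k)

/- ### Auxiliary machinery -/

noncomputable def Fv (x : ℝ) : ℝ := Real.cos x + (1/2) * Real.log (2 - 2 * Real.cos x)

lemma hasDerivAt_Fv {x : ℝ} (hx : Real.cos x ≠ 1) :
    HasDerivAt Fv (Real.sin x * (-1 + 1/(2 - 2 * Real.cos x))) x := by
  have hne : 2 - 2 * Real.cos x ≠ 0 := by
    have := Real.cos_le_one x
    rcases lt_or_eq_of_le this with h | h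
    · nlinarith
    · exact absurd h hx
  have h1 : HasDerivAt Real.cos (-Real.sin x) x := Real.hasDerivAt_cos x
  have h2 : HasDerivAt (fun y => 2 - 2 * Real.cos y) (0 - 2 * (-Real.sin x)) x :=
    (hasDerivAt_const x (2:ℝ)).sub (h1.const_mul 2)
  have h3 := (h2.log hne).const_mul (1/2 : ℝ)
  have := h1.add h3
  refine this.congr_deriv ?_
  field_simp
  ring

lemma HA (c t d : ℝ) (h : Real.cos (t - c) ≠ 1)
    (hd : Real.sin (t - c) * (-1 + 1/(2 - 2 * Real.cos (t - c))) = d) :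
    HasDerivAt (fun s => Fv (s - c)) d t := by
  have := (hasDerivAt_Fv h).comp t ((hasDerivAt_id t).sub_const c)
  rw [← hd]; exact this.congr_deriv (by ring)

lemma HB (c t d : ℝ) (h : Real.cos (c - t) ≠ 1)
    (hd : -(Real.sin (c - t) * (-1 + 1/(2 - 2 * Real.cos (c - t)))) = d) :
    HasDerivAt (fun s => Fv (c - s)) d t := by
  have := (hasDerivAt_Fv h).comp t ((hasDerivAt_const t c).sub (hasDerivAt_id t))
  rw [← hd]
  exact this.congr_deriv (by ring)

lemma c32 : Real.cos (3 * π / 2) = 0 := by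
  rw [show 3 * π / 2 = π + π / 2 by ring]
  simp [Real.cos_add]
lemma s32 : Real.sin (3 * π / 2) = -1 := by
  rw [show 3 * π / 2 = π + π / 2 by ring]
  simp [Real.sin_add]

section
variable (μ1 μ2 μ3 μ4 : ℝ)

lemma pv0 : partialV ![μ1, μ2, μ3, μ4] ![0, π / 2, π, 3 * π / 2] 0
    = μ1 * (μ4 - μ2) / 2 := by
  have hfun : (fun t => V ![μ1, μ2, μ3, μ4] (Function.update ![0, π / 2, π, 3 * π / 2] 0 t))
      = fun t => -(μ1*μ2 * Fv (t - π/2) + μ1*μ3 * Fv (t - π) + μ1*μ4 * Fv (t - 3*π/2)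
        + (μ2*μ3 * Fv (π/2 - π) + μ2*μ4 * Fv (π/2 - 3*π/2) + μ3*μ4 * Fv (π - 3*π/2))) := by
    funext t
    simp [V, Fv, Function.update, show Finset.Ioi (0 : Fin 4) = {1,2,3} by decide,
      show Finset.Ioi (1 : Fin 4) = {2,3} by decide, show Finset.Ioi (2 : Fin 4) = {3} by decide,
      show Finset.Ioi (3 : Fin 4) = ∅ by decide, Fin.sum_univ_four]
    ring
  have A : HasDerivAt (fun s => Fv (s - π/2)) (1/2) 0 := by
    apply HA <;> rw [show (0:ℝ) - π/2 = -(π/2) by ring] <;> norm_num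
  have B : HasDerivAt (fun s => Fv (s - π)) 0 0 := by
    apply HA <;> rw [show (0:ℝ) - π = -π by ring] <;> norm_num
  have C : HasDerivAt (fun s => Fv (s - 3*π/2)) (-(1/2)) 0 := by
    apply HA <;> rw [show (0:ℝ) - 3*π/2 = -(3*π/2) by ring] <;> norm_num [c32, s32]
  have H := ((((A.const_mul (μ1*μ2)).add (B.const_mul (μ1*μ3))).add
      (C.const_mul (μ1*μ4))).add_const
      (μ2*μ3 * Fv (π/2 - π) + μ2*μ4 * Fv (π/2 - 3*π/2) + μ3*μ4 * Fv (π - 3*π/2))).neg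
  have H' : HasDerivAt (fun t => -(μ1*μ2 * Fv (t - π/2) + μ1*μ3 * Fv (t - π)
      + μ1*μ4 * Fv (t - 3*π/2)
      + (μ2*μ3 * Fv (π/2 - π) + μ2*μ4 * Fv (π/2 - 3*π/2) + μ3*μ4 * Fv (π - 3*π/2))))
      (μ1 * (μ4 - μ2) / 2) 0 := by
    exact H.congr_deriv (by ring)
  rw [partialV, show (![0, π / 2, π, 3 * π / 2] : Fin 4 → ℝ) 0 = 0 by simp, hfun, H'.deriv]

lemma pv1 : partialV ![μ1, μ2, μ3, μ4] ![0, π / 2, π, 3 * π / 2] 1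
    = μ2 * (μ1 - μ3) / 2 := by
  have hfun : (fun t => V ![μ1, μ2, μ3, μ4] (Function.update ![0, π / 2, π, 3 * π / 2] 1 t))
      = fun t => -(μ1*μ2 * Fv (0 - t) + μ2*μ3 * Fv (t - π) + μ2*μ4 * Fv (t - 3*π/2)
        + (μ1*μ3 * Fv (0 - π) + μ1*μ4 * Fv (0 - 3*π/2) + μ3*μ4 * Fv (π - 3*π/2))) := by
    funext t
    simp [V, Fv, Function.update, show Finset.Ioi (0 : Fin 4) = {1,2,3} by decide,
      show Finset.Ioi (1 : Fin 4) = {2,3} by decide, show Finset.Ioi (2 : Fin 4) = {3} by decide,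
      show Finset.Ioi (3 : Fin 4) = ∅ by decide, Fin.sum_univ_four]
    ring
  have A : HasDerivAt (fun s => Fv (0 - s)) (-(1/2)) (π/2) := by
    apply HB <;> rw [show (0:ℝ) - π/2 = -(π/2) by ring] <;> norm_num
  have B : HasDerivAt (fun s => Fv (s - π)) (1/2) (π/2) := by
    apply HA <;> rw [show π/2 - π = -(π/2) by ring] <;> norm_num
  have C : HasDerivAt (fun s => Fv (s - 3*π/2)) 0 (π/2) := by
    apply HA <;> rw [show π/2 - 3*π/2 = -π by ring] <;> norm_num
  have H := ((((A.const_mul (μ1*μ2)).add (B.const_mul (μ2*μ3))).add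
      (C.const_mul (μ2*μ4))).add_const
      (μ1*μ3 * Fv (0 - π) + μ1*μ4 * Fv (0 - 3*π/2) + μ3*μ4 * Fv (π - 3*π/2))).neg
  have H' : HasDerivAt (fun t => -(μ1*μ2 * Fv (0 - t) + μ2*μ3 * Fv (t - π)
      + μ2*μ4 * Fv (t - 3*π/2)
      + (μ1*μ3 * Fv (0 - π) + μ1*μ4 * Fv (0 - 3*π/2) + μ3*μ4 * Fv (π - 3*π/2))))
      (μ2 * (μ1 - μ3) / 2) (π/2) := by
    exact H.congr_deriv (by ring)
  rw [partialV, show (![0, π / 2, π, 3 * π / 2] : Fin 4 → ℝ) 1 = π/2 by simp, hfun, H'.deriv]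

lemma pv2 : partialV ![μ1, μ2, μ3, μ4] ![0, π / 2, π, 3 * π / 2] 2
    = μ3 * (μ2 - μ4) / 2 := by
  have hfun : (fun t => V ![μ1, μ2, μ3, μ4] (Function.update ![0, π / 2, π, 3 * π / 2] 2 t))
      = fun t => -(μ1*μ3 * Fv (0 - t) + μ2*μ3 * Fv (π/2 - t) + μ3*μ4 * Fv (t - 3*π/2)
        + (μ1*μ2 * Fv (0 - π/2) + μ1*μ4 * Fv (0 - 3*π/2) + μ2*μ4 * Fv (π/2 - 3*π/2))) := by
    funext t
    simp [V, Fv, Function.update, show Finset.Ioi (0 : Fin 4) = {1,2,3} by decide,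
      show Finset.Ioi (1 : Fin 4) = {2,3} by decide, show Finset.Ioi (2 : Fin 4) = {3} by decide,
      show Finset.Ioi (3 : Fin 4) = ∅ by decide, Fin.sum_univ_four]
    ring
  have A : HasDerivAt (fun s => Fv (0 - s)) 0 π := by
    apply HB <;> rw [show (0:ℝ) - π = -π by ring] <;> norm_num
  have B : HasDerivAt (fun s => Fv (π/2 - s)) (-(1/2)) π := by
    apply HB <;> rw [show π/2 - π = -(π/2) by ring] <;> norm_num
  have C : HasDerivAt (fun s => Fv (s - 3*π/2)) (1/2) π := by
    apply HA <;> rw [show π - 3*π/2 = -(π/2) by ring] <;> norm_num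
  have H := ((((A.const_mul (μ1*μ3)).add (B.const_mul (μ2*μ3))).add
      (C.const_mul (μ3*μ4))).add_const
      (μ1*μ2 * Fv (0 - π/2) + μ1*μ4 * Fv (0 - 3*π/2) + μ2*μ4 * Fv (π/2 - 3*π/2))).neg
  have H' : HasDerivAt (fun t => -(μ1*μ3 * Fv (0 - t) + μ2*μ3 * Fv (π/2 - t)
      + μ3*μ4 * Fv (t - 3*π/2)
      + (μ1*μ2 * Fv (0 - π/2) + μ1*μ4 * Fv (0 - 3*π/2) + μ2*μ4 * Fv (π/2 - 3*π/2))))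
      (μ3 * (μ2 - μ4) / 2) π := by
    exact H.congr_deriv (by ring)
  rw [partialV, show (![0, π / 2, π, 3 * π / 2] : Fin 4 → ℝ) 2 = π by simp, hfun, H'.deriv]

lemma pv3 : partialV ![μ1, μ2, μ3, μ4] ![0, π / 2, π, 3 * π / 2] 3
    = μ4 * (μ3 - μ1) / 2 := by
  have hfun : (fun t => V ![μ1, μ2, μ3, μ4] (Function.update ![0, π / 2, π, 3 * π / 2] 3 t))
      = fun t => -(μ1*μ4 * Fv (0 - t) + μ2*μ4 * Fv (π/2 - t) + μ3*μ4 * Fv (π - t)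
        + (μ1*μ2 * Fv (0 - π/2) + μ1*μ3 * Fv (0 - π) + μ2*μ3 * Fv (π/2 - π))) := by
    funext t
    simp [V, Fv, Function.update, show Finset.Ioi (0 : Fin 4) = {1,2,3} by decide,
      show Finset.Ioi (1 : Fin 4) = {2,3} by decide, show Finset.Ioi (2 : Fin 4) = {3} by decide,
      show Finset.Ioi (3 : Fin 4) = ∅ by decide, Fin.sum_univ_four]
    ring
  have A : HasDerivAt (fun s => Fv (0 - s)) (1/2) (3*π/2) := by
    apply HB <;> rw [show (0:ℝ) - 3*π/2 = -(3*π/2) by ring] <;> norm_num [c32, s32]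
  have B : HasDerivAt (fun s => Fv (π/2 - s)) 0 (3*π/2) := by
    apply HB <;> rw [show π/2 - 3*π/2 = -π by ring] <;> norm_num
  have C : HasDerivAt (fun s => Fv (π - s)) (-(1/2)) (3*π/2) := by
    apply HB <;> rw [show π - 3*π/2 = -(π/2) by ring] <;> norm_num
  have H := ((((A.const_mul (μ1*μ4)).add (B.const_mul (μ2*μ4))).add
      (C.const_mul (μ3*μ4))).add_const
      (μ1*μ2 * Fv (0 - π/2) + μ1*μ3 * Fv (0 - π) + μ2*μ3 * Fv (π/2 - π))).neg
  have H' : HasDerivAt (fun t => -(μ1*μ4 * Fv (0 - t) + μ2*μ4 * Fv (π/2 - t)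
      + μ3*μ4 * Fv (π - t)
      + (μ1*μ2 * Fv (0 - π/2) + μ1*μ3 * Fv (0 - π) + μ2*μ3 * Fv (π/2 - π))))
      (μ4 * (μ3 - μ1) / 2) (3*π/2) := by
    exact H.congr_deriv (by ring)
  rw [partialV, show (![0, π / 2, π, 3 * π / 2] : Fin 4 → ℝ) 3 = 3*π/2 by simp, hfun, H'.deriv]

end

/-- The (1+4)-gon: `(0, pi/2, pi, 3pi/2)` is a critical point of `V` iff
`mu1 = mu3` and `mu2 = mu4`. -/
theorem square_critical_iff (μ1 μ2 μ3 μ4 : ℝ)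
    (h1 : μ1 ≠ 0) (h2 : μ2 ≠ 0) (h3 : μ3 ≠ 0) (h4 : μ4 ≠ 0) :
    IsCriticalPt ![μ1, μ2, μ3, μ4] ![0, π / 2, π, 3 * π / 2] ↔
      μ1 = μ3 ∧ μ2 = μ4 := by
  constructor
  · intro h
    have e0 := h 0
    have e1 := h 1
    rw [pv0] at e0
    rw [pv1] at e1
    constructor
    · rcases mul_eq_zero.mp (by linarith : μ2 * (μ1 - μ3) = 0) with h' | h'
      · exact absurd h' h2
      · linarith
    · rcases mul_eq_zero.mp (by linarith : μ1 * (μ4 - μ2) = 0) with h' | h'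
      · exact absurd h' h1
      · linarith
  · rintro ⟨ha, hb⟩ k
    fin_cases k
    · show partialV ![μ1, μ2, μ3, μ4] ![0, π / 2, π, 3 * π / 2] 0 = 0
      rw [pv0, hb]; ring
    · show partialV ![μ1, μ2, μ3, μ4] ![0, π / 2, π, 3 * π / 2] 1 = 0
      rw [pv1, ha]; ring
    · show partialV ![μ1, μ2, μ3, μ4] ![0, π / 2, π, 3 * π / 2] 2 = 0
      rw [pv2, hb]; ring
    · show partialV ![μ1, μ2, μ3, μ4] ![0, π / 2, π, 3 * π / 2] 3 = 0
      rw [pv3, ha]; ring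
end

section
/- Let μ1, μ2 be real numbers and set μ3 = μ1, μ4 = μ2. The Hessian matrix H of V at the point (0, π/2, π, 3π/2) has characteristic polynomial X · (X − 2μ1μ2) · (X − (−3μ1² + 2μ1μ2)/2) · (X − (2μ1μ2 − 3μ2²)/2); equivalently, its eigenvalues are 0, 2μ1μ2, (−3μ1² + 2μ1μ2)/2, and (2μ1μ2 − 3μ2²)/2. -/
open Real Polynomial

set_option maxRecDepth 10000

noncomputable def F (x : ℝ) : ℝ := Real.cos x + (1/2) * Real.log (2 - 2 * Real.cos x)
noncomputable def F1 (x : ℝ) : ℝ := -Real.sin x + Real.sin x / (2 - 2 * Real.cos x)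
noncomputable def F2 (x : ℝ) : ℝ := -Real.cos x - 1 / (2 - 2 * Real.cos x)

lemma two_sub_ne {x : ℝ} (h : Real.cos x ≠ 1) : 2 - 2 * Real.cos x ≠ 0 := by
  have := Real.cos_le_one x
  intro h'; apply h; linarith [lt_of_le_of_ne this (by intro e; exact h e)]

lemma hasDerivAt_F {x : ℝ} (h : Real.cos x ≠ 1) : HasDerivAt F (F1 x) x := by
  have h1 : HasDerivAt (fun y : ℝ => 2 - 2 * Real.cos y) (2 * Real.sin x) x := by
    simpa using ((Real.hasDerivAt_cos x).const_mul 2).const_sub 2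
  have h2 := (h1.log (two_sub_ne h)).const_mul (1/2 : ℝ)
  have := (Real.hasDerivAt_cos x).add h2
  refine this.congr_deriv ?_
  rw [F1]
  have hne := two_sub_ne h
  field_simp

lemma hasDerivAt_F1 {x : ℝ} (h : Real.cos x ≠ 1) : HasDerivAt F1 (F2 x) x := by
  have hne := two_sub_ne h
  have h1 : HasDerivAt (fun y : ℝ => 2 - 2 * Real.cos y) (2 * Real.sin x) x := by
    simpa using ((Real.hasDerivAt_cos x).const_mul 2).const_sub 2
  have h2 := (Real.hasDerivAt_sin x).div h1 hne
  have := ((Real.hasDerivAt_sin x).neg).add h2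
  refine this.congr_deriv ?_
  have hs : Real.sin x ^ 2 = 1 - Real.cos x ^ 2 := by
    have := Real.sin_sq_add_cos_sq x; nlinarith
  rw [F2]
  field_simp
  nlinarith [sq_nonneg (2 - 2*Real.cos x)]

lemma V_apply (μ θ : Fin 4 → ℝ) :
    V μ θ = -(μ 0 * μ 1 * F (θ 0 - θ 1) + μ 0 * μ 2 * F (θ 0 - θ 2) +
      μ 0 * μ 3 * F (θ 0 - θ 3) + μ 1 * μ 2 * F (θ 1 - θ 2) +
      μ 1 * μ 3 * F (θ 1 - θ 3) + μ 2 * μ 3 * F (θ 2 - θ 3)) := by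
  rw [V, Fin.sum_univ_four]
  rw [show Finset.Ioi (0 : Fin 4) = {1, 2, 3} from rfl,
      show Finset.Ioi (1 : Fin 4) = {2, 3} from rfl,
      show Finset.Ioi (2 : Fin 4) = {3} from rfl,
      show Finset.Ioi (3 : Fin 4) = ∅ from rfl]
  simp [Finset.sum_insert, F]
  ring

lemma F1_neg (x : ℝ) : F1 (-x) = -F1 x := by simp [F1]; ring
lemma F2_neg (x : ℝ) : F2 (-x) = F2 x := by simp [F2]

lemma hasDerivAt_F_sub {c x : ℝ} (h : Real.cos (x - c) ≠ 1) :
    HasDerivAt (fun t => F (t - c)) (F1 (x - c)) x := by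
  simpa [Function.comp_def] using (hasDerivAt_F h).comp x ((hasDerivAt_id x).sub_const c)

lemma hasDerivAt_F_const_sub {c x : ℝ} (h : Real.cos (c - x) ≠ 1) :
    HasDerivAt (fun t => F (c - t)) (F1 (x - c)) x := by
  have := (hasDerivAt_F h).comp x ((hasDerivAt_id x).const_sub c)
  simpa [← F1_neg, neg_sub, Function.comp_def] using this

lemma hasDerivAt_F1_sub {c x : ℝ} (h : Real.cos (x - c) ≠ 1) :
    HasDerivAt (fun t => F1 (t - c)) (F2 (x - c)) x := by
  simpa [Function.comp_def] using (hasDerivAt_F1 h).comp x ((hasDerivAt_id x).sub_const c)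

lemma hasDerivAt_F1_const_sub {c x : ℝ} (h : Real.cos (c - x) ≠ 1) :
    HasDerivAt (fun t => F1 (c - t)) (-F2 (x - c)) x := by
  have := (hasDerivAt_F1 h).comp x ((hasDerivAt_id x).const_sub c)
  rw [show x - c = -(c - x) by ring, F2_neg]
  simpa [Function.comp_def] using this

lemma partialV0 (μ θ : Fin 4 → ℝ) (h1 : Real.cos (θ 0 - θ 1) ≠ 1)
    (h2 : Real.cos (θ 0 - θ 2) ≠ 1) (h3 : Real.cos (θ 0 - θ 3) ≠ 1) :
    partialV μ θ 0 = -(μ 0 * μ 1 * F1 (θ 0 - θ 1) + μ 0 * μ 2 * F1 (θ 0 - θ 2) +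
      μ 0 * μ 3 * F1 (θ 0 - θ 3)) := by
  rw [partialV]
  have heq : (fun t => V μ (Function.update θ 0 t)) = fun t =>
      -(μ 0 * μ 1 * F (t - θ 1) + μ 0 * μ 2 * F (t - θ 2) + μ 0 * μ 3 * F (t - θ 3) +
        (μ 1 * μ 2 * F (θ 1 - θ 2) + μ 1 * μ 3 * F (θ 1 - θ 3) + μ 2 * μ 3 * F (θ 2 - θ 3))) := by
    funext t
    rw [V_apply]
    simp only [Function.update_self, Function.update_of_ne (by decide : (1:Fin 4) ≠ 0), Function.update_of_ne (by decide : (2:Fin 4) ≠ 0), Function.update_of_ne (by decide : (3:Fin 4) ≠ 0)]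
    ring
  rw [heq]
  exact ((((((hasDerivAt_F_sub h1).const_mul (μ 0 * μ 1)).add
    ((hasDerivAt_F_sub h2).const_mul (μ 0 * μ 2))).add
    ((hasDerivAt_F_sub h3).const_mul (μ 0 * μ 3))).add_const _).neg).deriv

lemma partialV1 (μ θ : Fin 4 → ℝ) (h1 : Real.cos (θ 0 - θ 1) ≠ 1)
    (h2 : Real.cos (θ 1 - θ 2) ≠ 1) (h3 : Real.cos (θ 1 - θ 3) ≠ 1) :
    partialV μ θ 1 = -(μ 0 * μ 1 * F1 (θ 1 - θ 0) + μ 1 * μ 2 * F1 (θ 1 - θ 2) +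
      μ 1 * μ 3 * F1 (θ 1 - θ 3)) := by
  rw [partialV]
  have heq : (fun t => V μ (Function.update θ 1 t)) = fun t =>
      -(μ 0 * μ 1 * F (θ 0 - t) + μ 1 * μ 2 * F (t - θ 2) + μ 1 * μ 3 * F (t - θ 3) +
        (μ 0 * μ 2 * F (θ 0 - θ 2) + μ 0 * μ 3 * F (θ 0 - θ 3) + μ 2 * μ 3 * F (θ 2 - θ 3))) := by
    funext t
    rw [V_apply]
    simp only [Function.update_self, Function.update_of_ne (by decide : (0:Fin 4) ≠ 1),
      Function.update_of_ne (by decide : (2:Fin 4) ≠ 1),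
      Function.update_of_ne (by decide : (3:Fin 4) ≠ 1)]
    ring
  rw [heq]
  exact ((((((hasDerivAt_F_const_sub h1).const_mul (μ 0 * μ 1)).add
    ((hasDerivAt_F_sub h2).const_mul (μ 1 * μ 2))).add
    ((hasDerivAt_F_sub h3).const_mul (μ 1 * μ 3))).add_const _).neg).deriv

lemma partialV2 (μ θ : Fin 4 → ℝ) (h1 : Real.cos (θ 0 - θ 2) ≠ 1)
    (h2 : Real.cos (θ 1 - θ 2) ≠ 1) (h3 : Real.cos (θ 2 - θ 3) ≠ 1) :
    partialV μ θ 2 = -(μ 0 * μ 2 * F1 (θ 2 - θ 0) + μ 1 * μ 2 * F1 (θ 2 - θ 1) +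
      μ 2 * μ 3 * F1 (θ 2 - θ 3)) := by
  rw [partialV]
  have heq : (fun t => V μ (Function.update θ 2 t)) = fun t =>
      -(μ 0 * μ 2 * F (θ 0 - t) + μ 1 * μ 2 * F (θ 1 - t) + μ 2 * μ 3 * F (t - θ 3) +
        (μ 0 * μ 1 * F (θ 0 - θ 1) + μ 0 * μ 3 * F (θ 0 - θ 3) + μ 1 * μ 3 * F (θ 1 - θ 3))) := by
    funext t
    rw [V_apply]
    simp only [Function.update_self, Function.update_of_ne (by decide : (0:Fin 4) ≠ 2),
      Function.update_of_ne (by decide : (1:Fin 4) ≠ 2),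
      Function.update_of_ne (by decide : (3:Fin 4) ≠ 2)]
    ring
  rw [heq]
  exact ((((((hasDerivAt_F_const_sub h1).const_mul (μ 0 * μ 2)).add
    ((hasDerivAt_F_const_sub h2).const_mul (μ 1 * μ 2))).add
    ((hasDerivAt_F_sub h3).const_mul (μ 2 * μ 3))).add_const _).neg).deriv

lemma partialV3 (μ θ : Fin 4 → ℝ) (h1 : Real.cos (θ 0 - θ 3) ≠ 1)
    (h2 : Real.cos (θ 1 - θ 3) ≠ 1) (h3 : Real.cos (θ 2 - θ 3) ≠ 1) :
    partialV μ θ 3 = -(μ 0 * μ 3 * F1 (θ 3 - θ 0) + μ 1 * μ 3 * F1 (θ 3 - θ 1) +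
      μ 2 * μ 3 * F1 (θ 3 - θ 2)) := by
  rw [partialV]
  have heq : (fun t => V μ (Function.update θ 3 t)) = fun t =>
      -(μ 0 * μ 3 * F (θ 0 - t) + μ 1 * μ 3 * F (θ 1 - t) + μ 2 * μ 3 * F (θ 2 - t) +
        (μ 0 * μ 1 * F (θ 0 - θ 1) + μ 0 * μ 2 * F (θ 0 - θ 2) + μ 1 * μ 2 * F (θ 1 - θ 2))) := by
    funext t
    rw [V_apply]
    simp only [Function.update_self, Function.update_of_ne (by decide : (0:Fin 4) ≠ 3),
      Function.update_of_ne (by decide : (1:Fin 4) ≠ 3),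
      Function.update_of_ne (by decide : (2:Fin 4) ≠ 3)]
    ring
  rw [heq]
  exact ((((((hasDerivAt_F_const_sub h1).const_mul (μ 0 * μ 3)).add
    ((hasDerivAt_F_const_sub h2).const_mul (μ 1 * μ 3))).add
    ((hasDerivAt_F_const_sub h3).const_mul (μ 2 * μ 3))).add_const _).neg).deriv

lemma F2_eq0 {x : ℝ} (h : Real.cos x = 0) : F2 x = -(1/2) := by rw [F2, h]; norm_num
lemma F2_eqm1 {x : ℝ} (h : Real.cos x = -1) : F2 x = 3/4 := by rw [F2, h]; norm_num

lemma ev_sub {c x : ℝ} (h : Real.cos (x - c) ≠ 1) : ∀ᶠ t in nhds x, Real.cos (t - c) ≠ 1 :=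
  (Real.continuous_cos.comp (continuous_sub_right c)).continuousAt.eventually_ne h

lemma ev_csub {c x : ℝ} (h : Real.cos (c - x) ≠ 1) : ∀ᶠ t in nhds x, Real.cos (c - t) ≠ 1 :=
  (Real.continuous_cos.comp (continuous_sub_left c)).continuousAt.eventually_ne h

lemma upd0 (a b c d t : ℝ) : Function.update ![a,b,c,d] (0:Fin 4) t = ![t,b,c,d] := by
  funext i; fin_cases i <;> rfl
lemma upd1 (a b c d t : ℝ) : Function.update ![a,b,c,d] (1:Fin 4) t = ![a,t,c,d] := by
  funext i; fin_cases i <;> rfl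
lemma upd2 (a b c d t : ℝ) : Function.update ![a,b,c,d] (2:Fin 4) t = ![a,b,t,d] := by
  funext i; fin_cases i <;> rfl
lemma upd3 (a b c d t : ℝ) : Function.update ![a,b,c,d] (3:Fin 4) t = ![a,b,c,t] := by
  funext i; fin_cases i <;> rfl

theorem det_fin_four' {R : Type*} [CommRing R] (A : Matrix (Fin 4) (Fin 4) R) :
    A.det =
      A 0 0 * (A 1 1 * A 2 2 * A 3 3 - A 1 1 * A 2 3 * A 3 2 - A 1 2 * A 2 1 * A 3 3
        + A 1 2 * A 2 3 * A 3 1 + A 1 3 * A 2 1 * A 3 2 - A 1 3 * A 2 2 * A 3 1)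
      - A 0 1 * (A 1 0 * A 2 2 * A 3 3 - A 1 0 * A 2 3 * A 3 2 - A 1 2 * A 2 0 * A 3 3
        + A 1 2 * A 2 3 * A 3 0 + A 1 3 * A 2 0 * A 3 2 - A 1 3 * A 2 2 * A 3 0)
      + A 0 2 * (A 1 0 * A 2 1 * A 3 3 - A 1 0 * A 2 3 * A 3 1 - A 1 1 * A 2 0 * A 3 3
        + A 1 1 * A 2 3 * A 3 0 + A 1 3 * A 2 0 * A 3 1 - A 1 3 * A 2 1 * A 3 0)
      - A 0 3 * (A 1 0 * A 2 1 * A 3 2 - A 1 0 * A 2 2 * A 3 1 - A 1 1 * A 2 0 * A 3 2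
        + A 1 1 * A 2 2 * A 3 0 + A 1 2 * A 2 0 * A 3 1 - A 1 2 * A 2 1 * A 3 0) := by
  rw [Matrix.det_succ_row_zero, Fin.sum_univ_four]
  simp [Matrix.det_fin_three, Matrix.submatrix_apply, Fin.succAbove]
  norm_num [Fin.lt_def, show (Fin.succ 2 : Fin 4) = 3 from rfl, show ((3:Fin 4):ℕ) = 3 from rfl,
    show (Fin.castSucc 2 : Fin 4) = 2 from rfl]
  ring

lemma cd01 : Real.cos ((0:ℝ) - π / 2) = 0 := by
  rw [show ((0:ℝ) - π / 2 : ℝ) = -(π / 2) by ring]; simp [Real.cos_neg, Real.cos_pi_div_two, Real.cos_pi, c32]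
lemma nd01 : Real.cos ((0:ℝ) - π / 2) ≠ 1 := by rw [cd01]; norm_num
lemma fv01 : F2 ((0:ℝ) - π / 2) = -(1/2) := F2_eq0 cd01
lemma cd02 : Real.cos ((0:ℝ) - π) = -1 := by
  rw [show ((0:ℝ) - π : ℝ) = -π by ring]; simp [Real.cos_neg, Real.cos_pi_div_two, Real.cos_pi, c32]
lemma nd02 : Real.cos ((0:ℝ) - π) ≠ 1 := by rw [cd02]; norm_num
lemma fv02 : F2 ((0:ℝ) - π) = 3/4 := F2_eqm1 cd02
lemma cd03 : Real.cos ((0:ℝ) - 3 * π / 2) = 0 := by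
  rw [show ((0:ℝ) - 3 * π / 2 : ℝ) = -(3 * π / 2) by ring]; simp [Real.cos_neg, Real.cos_pi_div_two, Real.cos_pi, c32]
lemma nd03 : Real.cos ((0:ℝ) - 3 * π / 2) ≠ 1 := by rw [cd03]; norm_num
lemma fv03 : F2 ((0:ℝ) - 3 * π / 2) = -(1/2) := F2_eq0 cd03
lemma cd10 : Real.cos (π / 2 - (0:ℝ)) = 0 := by
  rw [show (π / 2 - (0:ℝ) : ℝ) = π / 2 by ring]; simp [Real.cos_neg, Real.cos_pi_div_two, Real.cos_pi, c32]
lemma nd10 : Real.cos (π / 2 - (0:ℝ)) ≠ 1 := by rw [cd10]; norm_num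
lemma fv10 : F2 (π / 2 - (0:ℝ)) = -(1/2) := F2_eq0 cd10
lemma cd12 : Real.cos (π / 2 - π) = 0 := by
  rw [show (π / 2 - π : ℝ) = -(π / 2) by ring]; simp [Real.cos_neg, Real.cos_pi_div_two, Real.cos_pi, c32]
lemma nd12 : Real.cos (π / 2 - π) ≠ 1 := by rw [cd12]; norm_num
lemma fv12 : F2 (π / 2 - π) = -(1/2) := F2_eq0 cd12
lemma cd13 : Real.cos (π / 2 - 3 * π / 2) = -1 := by
  rw [show (π / 2 - 3 * π / 2 : ℝ) = -π by ring]; simp [Real.cos_neg, Real.cos_pi_div_two, Real.cos_pi, c32]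
lemma nd13 : Real.cos (π / 2 - 3 * π / 2) ≠ 1 := by rw [cd13]; norm_num
lemma fv13 : F2 (π / 2 - 3 * π / 2) = 3/4 := F2_eqm1 cd13
lemma cd20 : Real.cos (π - (0:ℝ)) = -1 := by
  rw [show (π - (0:ℝ) : ℝ) = π by ring]; simp [Real.cos_neg, Real.cos_pi_div_two, Real.cos_pi, c32]
lemma nd20 : Real.cos (π - (0:ℝ)) ≠ 1 := by rw [cd20]; norm_num
lemma fv20 : F2 (π - (0:ℝ)) = 3/4 := F2_eqm1 cd20
lemma cd21 : Real.cos (π - π / 2) = 0 := by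
  rw [show (π - π / 2 : ℝ) = π / 2 by ring]; simp [Real.cos_neg, Real.cos_pi_div_two, Real.cos_pi, c32]
lemma nd21 : Real.cos (π - π / 2) ≠ 1 := by rw [cd21]; norm_num
lemma fv21 : F2 (π - π / 2) = -(1/2) := F2_eq0 cd21
lemma cd23 : Real.cos (π - 3 * π / 2) = 0 := by
  rw [show (π - 3 * π / 2 : ℝ) = -(π / 2) by ring]; simp [Real.cos_neg, Real.cos_pi_div_two, Real.cos_pi, c32]
lemma nd23 : Real.cos (π - 3 * π / 2) ≠ 1 := by rw [cd23]; norm_num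
lemma fv23 : F2 (π - 3 * π / 2) = -(1/2) := F2_eq0 cd23
lemma cd30 : Real.cos (3 * π / 2 - (0:ℝ)) = 0 := by
  rw [show (3 * π / 2 - (0:ℝ) : ℝ) = 3 * π / 2 by ring]; simp [Real.cos_neg, Real.cos_pi_div_two, Real.cos_pi, c32]
lemma nd30 : Real.cos (3 * π / 2 - (0:ℝ)) ≠ 1 := by rw [cd30]; norm_num
lemma fv30 : F2 (3 * π / 2 - (0:ℝ)) = -(1/2) := F2_eq0 cd30
lemma cd31 : Real.cos (3 * π / 2 - π / 2) = -1 := by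
  rw [show (3 * π / 2 - π / 2 : ℝ) = π by ring]; simp [Real.cos_neg, Real.cos_pi_div_two, Real.cos_pi, c32]
lemma nd31 : Real.cos (3 * π / 2 - π / 2) ≠ 1 := by rw [cd31]; norm_num
lemma fv31 : F2 (3 * π / 2 - π / 2) = 3/4 := F2_eqm1 cd31
lemma cd32 : Real.cos (3 * π / 2 - π) = 0 := by
  rw [show (3 * π / 2 - π : ℝ) = π / 2 by ring]; simp [Real.cos_neg, Real.cos_pi_div_two, Real.cos_pi, c32]
lemma nd32 : Real.cos (3 * π / 2 - π) ≠ 1 := by rw [cd32]; norm_num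
lemma fv32 : F2 (3 * π / 2 - π) = -(1/2) := F2_eq0 cd32


set_option maxHeartbeats 1000000 in
/-- Characteristic polynomial of the Hessian of `V` at the (1+4)-gon with
`mu3 = mu1`, `mu4 = mu2`. -/
theorem square_hessian_charpoly (μ1 μ2 : ℝ) :
    (hessV ![μ1, μ2, μ1, μ2] ![0, π / 2, π, 3 * π / 2]).charpoly =
      X * (X - C (2 * μ1 * μ2)) * (X - C ((-3 * μ1 ^ 2 + 2 * μ1 * μ2) / 2)) *
        (X - C ((2 * μ1 * μ2 - 3 * μ2 ^ 2) / 2)) := by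
  have e00 : hessV ![μ1, μ2, μ1, μ2] ![0, π / 2, π, 3 * π / 2] 0 0 = μ1*μ2 - 3*μ1^2/4 := by
    show deriv (fun t => partialV ![μ1, μ2, μ1, μ2] (Function.update ![0, π / 2, π, 3 * π / 2] 0 t) 0) ((0:ℝ)) = μ1*μ2 - 3*μ1^2/4
    have hev : (fun t => partialV ![μ1, μ2, μ1, μ2] (Function.update ![0, π / 2, π, 3 * π / 2] 0 t) 0) =ᶠ[nhds ((0:ℝ))]
        (fun t => -(μ1 * μ2 * F1 (t - π / 2) + μ1 * μ1 * F1 (t - π) + μ1 * μ2 * F1 (t - 3 * π / 2))) := by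
      filter_upwards [ev_sub nd01, ev_sub nd02, ev_sub nd03] with t h1 h2 h3
      rw [upd0]
      exact partialV0 ![μ1, μ2, μ1, μ2] ![t, π / 2, π, 3 * π / 2] h1 h2 h3
    rw [hev.deriv_eq]
    have hd : HasDerivAt (fun t => -(μ1 * μ2 * F1 (t - π / 2) + μ1 * μ1 * F1 (t - π) + μ1 * μ2 * F1 (t - 3 * π / 2))) (-(μ1 * μ2 * F2 ((0:ℝ) - π / 2) + μ1 * μ1 * F2 ((0:ℝ) - π) + μ1 * μ2 * F2 ((0:ℝ) - 3 * π / 2))) ((0:ℝ)) := (((((hasDerivAt_F1_sub nd01).const_mul (μ1 * μ2))).add ((hasDerivAt_F1_sub nd02).const_mul (μ1 * μ1))).add ((hasDerivAt_F1_sub nd03).const_mul (μ1 * μ2))).neg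
    rw [hd.deriv, fv01, fv02, fv03]
    ring
  have e01 : hessV ![μ1, μ2, μ1, μ2] ![0, π / 2, π, 3 * π / 2] 0 1 = -(μ1*μ2)/2 := by
    show deriv (fun t => partialV ![μ1, μ2, μ1, μ2] (Function.update ![0, π / 2, π, 3 * π / 2] 0 t) 1) ((0:ℝ)) = -(μ1*μ2)/2
    have hev : (fun t => partialV ![μ1, μ2, μ1, μ2] (Function.update ![0, π / 2, π, 3 * π / 2] 0 t) 1) =ᶠ[nhds ((0:ℝ))]
        (fun t => -(μ1 * μ2 * F1 (π / 2 - t) + μ2 * μ1 * F1 (π / 2 - π) + μ2 * μ2 * F1 (π / 2 - 3 * π / 2))) := by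
      filter_upwards [ev_sub nd01] with t h1
      rw [upd0]
      exact partialV1 ![μ1, μ2, μ1, μ2] ![t, π / 2, π, 3 * π / 2] h1 nd12 nd13
    rw [hev.deriv_eq]
    have hd : HasDerivAt (fun t => -(μ1 * μ2 * F1 (π / 2 - t) + μ2 * μ1 * F1 (π / 2 - π) + μ2 * μ2 * F1 (π / 2 - 3 * π / 2))) (-(μ1 * μ2 * -F2 ((0:ℝ) - π / 2) + 0 + 0)) ((0:ℝ)) := (((((hasDerivAt_F1_const_sub nd10).const_mul (μ1 * μ2))).add (hasDerivAt_const ((0:ℝ)) (μ2 * μ1 * F1 (π / 2 - π)))).add (hasDerivAt_const ((0:ℝ)) (μ2 * μ2 * F1 (π / 2 - 3 * π / 2)))).neg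
    rw [hd.deriv, fv01]
    ring
  have e02 : hessV ![μ1, μ2, μ1, μ2] ![0, π / 2, π, 3 * π / 2] 0 2 = 3*μ1^2/4 := by
    show deriv (fun t => partialV ![μ1, μ2, μ1, μ2] (Function.update ![0, π / 2, π, 3 * π / 2] 0 t) 2) ((0:ℝ)) = 3*μ1^2/4
    have hev : (fun t => partialV ![μ1, μ2, μ1, μ2] (Function.update ![0, π / 2, π, 3 * π / 2] 0 t) 2) =ᶠ[nhds ((0:ℝ))]
        (fun t => -(μ1 * μ1 * F1 (π - t) + μ2 * μ1 * F1 (π - π / 2) + μ1 * μ2 * F1 (π - 3 * π / 2))) := by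
      filter_upwards [ev_sub nd02] with t h1
      rw [upd0]
      exact partialV2 ![μ1, μ2, μ1, μ2] ![t, π / 2, π, 3 * π / 2] h1 nd12 nd23
    rw [hev.deriv_eq]
    have hd : HasDerivAt (fun t => -(μ1 * μ1 * F1 (π - t) + μ2 * μ1 * F1 (π - π / 2) + μ1 * μ2 * F1 (π - 3 * π / 2))) (-(μ1 * μ1 * -F2 ((0:ℝ) - π) + 0 + 0)) ((0:ℝ)) := (((((hasDerivAt_F1_const_sub nd20).const_mul (μ1 * μ1))).add (hasDerivAt_const ((0:ℝ)) (μ2 * μ1 * F1 (π - π / 2)))).add (hasDerivAt_const ((0:ℝ)) (μ1 * μ2 * F1 (π - 3 * π / 2)))).neg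
    rw [hd.deriv, fv02]
    ring
  have e03 : hessV ![μ1, μ2, μ1, μ2] ![0, π / 2, π, 3 * π / 2] 0 3 = -(μ1*μ2)/2 := by
    show deriv (fun t => partialV ![μ1, μ2, μ1, μ2] (Function.update ![0, π / 2, π, 3 * π / 2] 0 t) 3) ((0:ℝ)) = -(μ1*μ2)/2
    have hev : (fun t => partialV ![μ1, μ2, μ1, μ2] (Function.update ![0, π / 2, π, 3 * π / 2] 0 t) 3) =ᶠ[nhds ((0:ℝ))]
        (fun t => -(μ1 * μ2 * F1 (3 * π / 2 - t) + μ2 * μ2 * F1 (3 * π / 2 - π / 2) + μ1 * μ2 * F1 (3 * π / 2 - π))) := by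
      filter_upwards [ev_sub nd03] with t h1
      rw [upd0]
      exact partialV3 ![μ1, μ2, μ1, μ2] ![t, π / 2, π, 3 * π / 2] h1 nd13 nd23
    rw [hev.deriv_eq]
    have hd : HasDerivAt (fun t => -(μ1 * μ2 * F1 (3 * π / 2 - t) + μ2 * μ2 * F1 (3 * π / 2 - π / 2) + μ1 * μ2 * F1 (3 * π / 2 - π))) (-(μ1 * μ2 * -F2 ((0:ℝ) - 3 * π / 2) + 0 + 0)) ((0:ℝ)) := (((((hasDerivAt_F1_const_sub nd30).const_mul (μ1 * μ2))).add (hasDerivAt_const ((0:ℝ)) (μ2 * μ2 * F1 (3 * π / 2 - π / 2)))).add (hasDerivAt_const ((0:ℝ)) (μ1 * μ2 * F1 (3 * π / 2 - π)))).neg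
    rw [hd.deriv, fv03]
    ring
  have e10 : hessV ![μ1, μ2, μ1, μ2] ![0, π / 2, π, 3 * π / 2] 1 0 = -(μ1*μ2)/2 := by
    show deriv (fun t => partialV ![μ1, μ2, μ1, μ2] (Function.update ![0, π / 2, π, 3 * π / 2] 1 t) 0) (π / 2) = -(μ1*μ2)/2
    have hev : (fun t => partialV ![μ1, μ2, μ1, μ2] (Function.update ![0, π / 2, π, 3 * π / 2] 1 t) 0) =ᶠ[nhds (π / 2)]
        (fun t => -(μ1 * μ2 * F1 ((0:ℝ) - t) + μ1 * μ1 * F1 ((0:ℝ) - π) + μ1 * μ2 * F1 ((0:ℝ) - 3 * π / 2))) := by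
      filter_upwards [ev_csub nd01] with t h1
      rw [upd1]
      exact partialV0 ![μ1, μ2, μ1, μ2] ![0, t, π, 3 * π / 2] h1 nd02 nd03
    rw [hev.deriv_eq]
    have hd : HasDerivAt (fun t => -(μ1 * μ2 * F1 ((0:ℝ) - t) + μ1 * μ1 * F1 ((0:ℝ) - π) + μ1 * μ2 * F1 ((0:ℝ) - 3 * π / 2))) (-(μ1 * μ2 * -F2 (π / 2 - (0:ℝ)) + 0 + 0)) (π / 2) := (((((hasDerivAt_F1_const_sub nd01).const_mul (μ1 * μ2))).add (hasDerivAt_const (π / 2) (μ1 * μ1 * F1 ((0:ℝ) - π)))).add (hasDerivAt_const (π / 2) (μ1 * μ2 * F1 ((0:ℝ) - 3 * π / 2)))).neg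
    rw [hd.deriv, fv10]
    ring
  have e11 : hessV ![μ1, μ2, μ1, μ2] ![0, π / 2, π, 3 * π / 2] 1 1 = μ1*μ2 - 3*μ2^2/4 := by
    show deriv (fun t => partialV ![μ1, μ2, μ1, μ2] (Function.update ![0, π / 2, π, 3 * π / 2] 1 t) 1) (π / 2) = μ1*μ2 - 3*μ2^2/4
    have hev : (fun t => partialV ![μ1, μ2, μ1, μ2] (Function.update ![0, π / 2, π, 3 * π / 2] 1 t) 1) =ᶠ[nhds (π / 2)]
        (fun t => -(μ1 * μ2 * F1 (t - (0:ℝ)) + μ2 * μ1 * F1 (t - π) + μ2 * μ2 * F1 (t - 3 * π / 2))) := by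
      filter_upwards [ev_csub nd01, ev_sub nd12, ev_sub nd13] with t h1 h2 h3
      rw [upd1]
      exact partialV1 ![μ1, μ2, μ1, μ2] ![0, t, π, 3 * π / 2] h1 h2 h3
    rw [hev.deriv_eq]
    have hd : HasDerivAt (fun t => -(μ1 * μ2 * F1 (t - (0:ℝ)) + μ2 * μ1 * F1 (t - π) + μ2 * μ2 * F1 (t - 3 * π / 2))) (-(μ1 * μ2 * F2 (π / 2 - (0:ℝ)) + μ2 * μ1 * F2 (π / 2 - π) + μ2 * μ2 * F2 (π / 2 - 3 * π / 2))) (π / 2) := (((((hasDerivAt_F1_sub nd10).const_mul (μ1 * μ2))).add ((hasDerivAt_F1_sub nd12).const_mul (μ2 * μ1))).add ((hasDerivAt_F1_sub nd13).const_mul (μ2 * μ2))).neg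
    rw [hd.deriv, fv10, fv12, fv13]
    ring
  have e12 : hessV ![μ1, μ2, μ1, μ2] ![0, π / 2, π, 3 * π / 2] 1 2 = -(μ1*μ2)/2 := by
    show deriv (fun t => partialV ![μ1, μ2, μ1, μ2] (Function.update ![0, π / 2, π, 3 * π / 2] 1 t) 2) (π / 2) = -(μ1*μ2)/2
    have hev : (fun t => partialV ![μ1, μ2, μ1, μ2] (Function.update ![0, π / 2, π, 3 * π / 2] 1 t) 2) =ᶠ[nhds (π / 2)]
        (fun t => -(μ1 * μ1 * F1 (π - (0:ℝ)) + μ2 * μ1 * F1 (π - t) + μ1 * μ2 * F1 (π - 3 * π / 2))) := by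
      filter_upwards [ev_sub nd12] with t h1
      rw [upd1]
      exact partialV2 ![μ1, μ2, μ1, μ2] ![0, t, π, 3 * π / 2] nd02 h1 nd23
    rw [hev.deriv_eq]
    have hd : HasDerivAt (fun t => -(μ1 * μ1 * F1 (π - (0:ℝ)) + μ2 * μ1 * F1 (π - t) + μ1 * μ2 * F1 (π - 3 * π / 2))) (-(0 + μ2 * μ1 * -F2 (π / 2 - π) + 0)) (π / 2) := ((((hasDerivAt_const (π / 2) (μ1 * μ1 * F1 (π - (0:ℝ))))).add ((hasDerivAt_F1_const_sub nd21).const_mul (μ2 * μ1))).add (hasDerivAt_const (π / 2) (μ1 * μ2 * F1 (π - 3 * π / 2)))).neg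
    rw [hd.deriv, fv12]
    ring
  have e13 : hessV ![μ1, μ2, μ1, μ2] ![0, π / 2, π, 3 * π / 2] 1 3 = 3*μ2^2/4 := by
    show deriv (fun t => partialV ![μ1, μ2, μ1, μ2] (Function.update ![0, π / 2, π, 3 * π / 2] 1 t) 3) (π / 2) = 3*μ2^2/4
    have hev : (fun t => partialV ![μ1, μ2, μ1, μ2] (Function.update ![0, π / 2, π, 3 * π / 2] 1 t) 3) =ᶠ[nhds (π / 2)]
        (fun t => -(μ1 * μ2 * F1 (3 * π / 2 - (0:ℝ)) + μ2 * μ2 * F1 (3 * π / 2 - t) + μ1 * μ2 * F1 (3 * π / 2 - π))) := by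
      filter_upwards [ev_sub nd13] with t h1
      rw [upd1]
      exact partialV3 ![μ1, μ2, μ1, μ2] ![0, t, π, 3 * π / 2] nd03 h1 nd23
    rw [hev.deriv_eq]
    have hd : HasDerivAt (fun t => -(μ1 * μ2 * F1 (3 * π / 2 - (0:ℝ)) + μ2 * μ2 * F1 (3 * π / 2 - t) + μ1 * μ2 * F1 (3 * π / 2 - π))) (-(0 + μ2 * μ2 * -F2 (π / 2 - 3 * π / 2) + 0)) (π / 2) := ((((hasDerivAt_const (π / 2) (μ1 * μ2 * F1 (3 * π / 2 - (0:ℝ))))).add ((hasDerivAt_F1_const_sub nd31).const_mul (μ2 * μ2))).add (hasDerivAt_const (π / 2) (μ1 * μ2 * F1 (3 * π / 2 - π)))).neg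
    rw [hd.deriv, fv13]
    ring
  have e20 : hessV ![μ1, μ2, μ1, μ2] ![0, π / 2, π, 3 * π / 2] 2 0 = 3*μ1^2/4 := by
    show deriv (fun t => partialV ![μ1, μ2, μ1, μ2] (Function.update ![0, π / 2, π, 3 * π / 2] 2 t) 0) (π) = 3*μ1^2/4
    have hev : (fun t => partialV ![μ1, μ2, μ1, μ2] (Function.update ![0, π / 2, π, 3 * π / 2] 2 t) 0) =ᶠ[nhds (π)]
        (fun t => -(μ1 * μ2 * F1 ((0:ℝ) - π / 2) + μ1 * μ1 * F1 ((0:ℝ) - t) + μ1 * μ2 * F1 ((0:ℝ) - 3 * π / 2))) := by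
      filter_upwards [ev_csub nd02] with t h1
      rw [upd2]
      exact partialV0 ![μ1, μ2, μ1, μ2] ![0, π / 2, t, 3 * π / 2] nd01 h1 nd03
    rw [hev.deriv_eq]
    have hd : HasDerivAt (fun t => -(μ1 * μ2 * F1 ((0:ℝ) - π / 2) + μ1 * μ1 * F1 ((0:ℝ) - t) + μ1 * μ2 * F1 ((0:ℝ) - 3 * π / 2))) (-(0 + μ1 * μ1 * -F2 (π - (0:ℝ)) + 0)) (π) := ((((hasDerivAt_const (π) (μ1 * μ2 * F1 ((0:ℝ) - π / 2)))).add ((hasDerivAt_F1_const_sub nd02).const_mul (μ1 * μ1))).add (hasDerivAt_const (π) (μ1 * μ2 * F1 ((0:ℝ) - 3 * π / 2)))).neg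
    rw [hd.deriv, fv20]
    ring
  have e21 : hessV ![μ1, μ2, μ1, μ2] ![0, π / 2, π, 3 * π / 2] 2 1 = -(μ1*μ2)/2 := by
    show deriv (fun t => partialV ![μ1, μ2, μ1, μ2] (Function.update ![0, π / 2, π, 3 * π / 2] 2 t) 1) (π) = -(μ1*μ2)/2
    have hev : (fun t => partialV ![μ1, μ2, μ1, μ2] (Function.update ![0, π / 2, π, 3 * π / 2] 2 t) 1) =ᶠ[nhds (π)]
        (fun t => -(μ1 * μ2 * F1 (π / 2 - (0:ℝ)) + μ2 * μ1 * F1 (π / 2 - t) + μ2 * μ2 * F1 (π / 2 - 3 * π / 2))) := by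
      filter_upwards [ev_csub nd12] with t h1
      rw [upd2]
      exact partialV1 ![μ1, μ2, μ1, μ2] ![0, π / 2, t, 3 * π / 2] nd01 h1 nd13
    rw [hev.deriv_eq]
    have hd : HasDerivAt (fun t => -(μ1 * μ2 * F1 (π / 2 - (0:ℝ)) + μ2 * μ1 * F1 (π / 2 - t) + μ2 * μ2 * F1 (π / 2 - 3 * π / 2))) (-(0 + μ2 * μ1 * -F2 (π - π / 2) + 0)) (π) := ((((hasDerivAt_const (π) (μ1 * μ2 * F1 (π / 2 - (0:ℝ))))).add ((hasDerivAt_F1_const_sub nd12).const_mul (μ2 * μ1))).add (hasDerivAt_const (π) (μ2 * μ2 * F1 (π / 2 - 3 * π / 2)))).neg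
    rw [hd.deriv, fv21]
    ring
  have e22 : hessV ![μ1, μ2, μ1, μ2] ![0, π / 2, π, 3 * π / 2] 2 2 = μ1*μ2 - 3*μ1^2/4 := by
    show deriv (fun t => partialV ![μ1, μ2, μ1, μ2] (Function.update ![0, π / 2, π, 3 * π / 2] 2 t) 2) (π) = μ1*μ2 - 3*μ1^2/4
    have hev : (fun t => partialV ![μ1, μ2, μ1, μ2] (Function.update ![0, π / 2, π, 3 * π / 2] 2 t) 2) =ᶠ[nhds (π)]
        (fun t => -(μ1 * μ1 * F1 (t - (0:ℝ)) + μ2 * μ1 * F1 (t - π / 2) + μ1 * μ2 * F1 (t - 3 * π / 2))) := by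
      filter_upwards [ev_csub nd02, ev_csub nd12, ev_sub nd23] with t h1 h2 h3
      rw [upd2]
      exact partialV2 ![μ1, μ2, μ1, μ2] ![0, π / 2, t, 3 * π / 2] h1 h2 h3
    rw [hev.deriv_eq]
    have hd : HasDerivAt (fun t => -(μ1 * μ1 * F1 (t - (0:ℝ)) + μ2 * μ1 * F1 (t - π / 2) + μ1 * μ2 * F1 (t - 3 * π / 2))) (-(μ1 * μ1 * F2 (π - (0:ℝ)) + μ2 * μ1 * F2 (π - π / 2) + μ1 * μ2 * F2 (π - 3 * π / 2))) (π) := (((((hasDerivAt_F1_sub nd20).const_mul (μ1 * μ1))).add ((hasDerivAt_F1_sub nd21).const_mul (μ2 * μ1))).add ((hasDerivAt_F1_sub nd23).const_mul (μ1 * μ2))).neg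
    rw [hd.deriv, fv20, fv21, fv23]
    ring
  have e23 : hessV ![μ1, μ2, μ1, μ2] ![0, π / 2, π, 3 * π / 2] 2 3 = -(μ1*μ2)/2 := by
    show deriv (fun t => partialV ![μ1, μ2, μ1, μ2] (Function.update ![0, π / 2, π, 3 * π / 2] 2 t) 3) (π) = -(μ1*μ2)/2
    have hev : (fun t => partialV ![μ1, μ2, μ1, μ2] (Function.update ![0, π / 2, π, 3 * π / 2] 2 t) 3) =ᶠ[nhds (π)]
        (fun t => -(μ1 * μ2 * F1 (3 * π / 2 - (0:ℝ)) + μ2 * μ2 * F1 (3 * π / 2 - π / 2) + μ1 * μ2 * F1 (3 * π / 2 - t))) := by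
      filter_upwards [ev_sub nd23] with t h1
      rw [upd2]
      exact partialV3 ![μ1, μ2, μ1, μ2] ![0, π / 2, t, 3 * π / 2] nd03 nd13 h1
    rw [hev.deriv_eq]
    have hd : HasDerivAt (fun t => -(μ1 * μ2 * F1 (3 * π / 2 - (0:ℝ)) + μ2 * μ2 * F1 (3 * π / 2 - π / 2) + μ1 * μ2 * F1 (3 * π / 2 - t))) (-(0 + 0 + μ1 * μ2 * -F2 (π - 3 * π / 2))) (π) := ((((hasDerivAt_const (π) (μ1 * μ2 * F1 (3 * π / 2 - (0:ℝ))))).add (hasDerivAt_const (π) (μ2 * μ2 * F1 (3 * π / 2 - π / 2)))).add ((hasDerivAt_F1_const_sub nd32).const_mul (μ1 * μ2))).neg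
    rw [hd.deriv, fv23]
    ring
  have e30 : hessV ![μ1, μ2, μ1, μ2] ![0, π / 2, π, 3 * π / 2] 3 0 = -(μ1*μ2)/2 := by
    show deriv (fun t => partialV ![μ1, μ2, μ1, μ2] (Function.update ![0, π / 2, π, 3 * π / 2] 3 t) 0) (3 * π / 2) = -(μ1*μ2)/2
    have hev : (fun t => partialV ![μ1, μ2, μ1, μ2] (Function.update ![0, π / 2, π, 3 * π / 2] 3 t) 0) =ᶠ[nhds (3 * π / 2)]
        (fun t => -(μ1 * μ2 * F1 ((0:ℝ) - π / 2) + μ1 * μ1 * F1 ((0:ℝ) - π) + μ1 * μ2 * F1 ((0:ℝ) - t))) := by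
      filter_upwards [ev_csub nd03] with t h1
      rw [upd3]
      exact partialV0 ![μ1, μ2, μ1, μ2] ![0, π / 2, π, t] nd01 nd02 h1
    rw [hev.deriv_eq]
    have hd : HasDerivAt (fun t => -(μ1 * μ2 * F1 ((0:ℝ) - π / 2) + μ1 * μ1 * F1 ((0:ℝ) - π) + μ1 * μ2 * F1 ((0:ℝ) - t))) (-(0 + 0 + μ1 * μ2 * -F2 (3 * π / 2 - (0:ℝ)))) (3 * π / 2) := ((((hasDerivAt_const (3 * π / 2) (μ1 * μ2 * F1 ((0:ℝ) - π / 2)))).add (hasDerivAt_const (3 * π / 2) (μ1 * μ1 * F1 ((0:ℝ) - π)))).add ((hasDerivAt_F1_const_sub nd03).const_mul (μ1 * μ2))).neg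
    rw [hd.deriv, fv30]
    ring
  have e31 : hessV ![μ1, μ2, μ1, μ2] ![0, π / 2, π, 3 * π / 2] 3 1 = 3*μ2^2/4 := by
    show deriv (fun t => partialV ![μ1, μ2, μ1, μ2] (Function.update ![0, π / 2, π, 3 * π / 2] 3 t) 1) (3 * π / 2) = 3*μ2^2/4
    have hev : (fun t => partialV ![μ1, μ2, μ1, μ2] (Function.update ![0, π / 2, π, 3 * π / 2] 3 t) 1) =ᶠ[nhds (3 * π / 2)]
        (fun t => -(μ1 * μ2 * F1 (π / 2 - (0:ℝ)) + μ2 * μ1 * F1 (π / 2 - π) + μ2 * μ2 * F1 (π / 2 - t))) := by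
      filter_upwards [ev_csub nd13] with t h1
      rw [upd3]
      exact partialV1 ![μ1, μ2, μ1, μ2] ![0, π / 2, π, t] nd01 nd12 h1
    rw [hev.deriv_eq]
    have hd : HasDerivAt (fun t => -(μ1 * μ2 * F1 (π / 2 - (0:ℝ)) + μ2 * μ1 * F1 (π / 2 - π) + μ2 * μ2 * F1 (π / 2 - t))) (-(0 + 0 + μ2 * μ2 * -F2 (3 * π / 2 - π / 2))) (3 * π / 2) := ((((hasDerivAt_const (3 * π / 2) (μ1 * μ2 * F1 (π / 2 - (0:ℝ))))).add (hasDerivAt_const (3 * π / 2) (μ2 * μ1 * F1 (π / 2 - π)))).add ((hasDerivAt_F1_const_sub nd13).const_mul (μ2 * μ2))).neg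
    rw [hd.deriv, fv31]
    ring
  have e32 : hessV ![μ1, μ2, μ1, μ2] ![0, π / 2, π, 3 * π / 2] 3 2 = -(μ1*μ2)/2 := by
    show deriv (fun t => partialV ![μ1, μ2, μ1, μ2] (Function.update ![0, π / 2, π, 3 * π / 2] 3 t) 2) (3 * π / 2) = -(μ1*μ2)/2
    have hev : (fun t => partialV ![μ1, μ2, μ1, μ2] (Function.update ![0, π / 2, π, 3 * π / 2] 3 t) 2) =ᶠ[nhds (3 * π / 2)]
        (fun t => -(μ1 * μ1 * F1 (π - (0:ℝ)) + μ2 * μ1 * F1 (π - π / 2) + μ1 * μ2 * F1 (π - t))) := by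
      filter_upwards [ev_csub nd23] with t h1
      rw [upd3]
      exact partialV2 ![μ1, μ2, μ1, μ2] ![0, π / 2, π, t] nd02 nd12 h1
    rw [hev.deriv_eq]
    have hd : HasDerivAt (fun t => -(μ1 * μ1 * F1 (π - (0:ℝ)) + μ2 * μ1 * F1 (π - π / 2) + μ1 * μ2 * F1 (π - t))) (-(0 + 0 + μ1 * μ2 * -F2 (3 * π / 2 - π))) (3 * π / 2) := ((((hasDerivAt_const (3 * π / 2) (μ1 * μ1 * F1 (π - (0:ℝ))))).add (hasDerivAt_const (3 * π / 2) (μ2 * μ1 * F1 (π - π / 2)))).add ((hasDerivAt_F1_const_sub nd23).const_mul (μ1 * μ2))).neg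
    rw [hd.deriv, fv32]
    ring
  have e33 : hessV ![μ1, μ2, μ1, μ2] ![0, π / 2, π, 3 * π / 2] 3 3 = μ1*μ2 - 3*μ2^2/4 := by
    show deriv (fun t => partialV ![μ1, μ2, μ1, μ2] (Function.update ![0, π / 2, π, 3 * π / 2] 3 t) 3) (3 * π / 2) = μ1*μ2 - 3*μ2^2/4
    have hev : (fun t => partialV ![μ1, μ2, μ1, μ2] (Function.update ![0, π / 2, π, 3 * π / 2] 3 t) 3) =ᶠ[nhds (3 * π / 2)]
        (fun t => -(μ1 * μ2 * F1 (t - (0:ℝ)) + μ2 * μ2 * F1 (t - π / 2) + μ1 * μ2 * F1 (t - π))) := by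
      filter_upwards [ev_csub nd03, ev_csub nd13, ev_csub nd23] with t h1 h2 h3
      rw [upd3]
      exact partialV3 ![μ1, μ2, μ1, μ2] ![0, π / 2, π, t] h1 h2 h3
    rw [hev.deriv_eq]
    have hd : HasDerivAt (fun t => -(μ1 * μ2 * F1 (t - (0:ℝ)) + μ2 * μ2 * F1 (t - π / 2) + μ1 * μ2 * F1 (t - π))) (-(μ1 * μ2 * F2 (3 * π / 2 - (0:ℝ)) + μ2 * μ2 * F2 (3 * π / 2 - π / 2) + μ1 * μ2 * F2 (3 * π / 2 - π))) (3 * π / 2) := (((((hasDerivAt_F1_sub nd30).const_mul (μ1 * μ2))).add ((hasDerivAt_F1_sub nd31).const_mul (μ2 * μ2))).add ((hasDerivAt_F1_sub nd32).const_mul (μ1 * μ2))).neg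
    rw [hd.deriv, fv30, fv31, fv32]
    ring

  have hmat : hessV ![μ1, μ2, μ1, μ2] ![0, π / 2, π, 3 * π / 2] =
      (!![μ1*μ2 - 3*μ1^2/4, -(μ1*μ2)/2, 3*μ1^2/4, -(μ1*μ2)/2;
      -(μ1*μ2)/2, μ1*μ2 - 3*μ2^2/4, -(μ1*μ2)/2, 3*μ2^2/4;
      3*μ1^2/4, -(μ1*μ2)/2, μ1*μ2 - 3*μ1^2/4, -(μ1*μ2)/2;
      -(μ1*μ2)/2, 3*μ2^2/4, -(μ1*μ2)/2, μ1*μ2 - 3*μ2^2/4] : Matrix (Fin 4) (Fin 4) ℝ) := by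
    ext k l
    fin_cases k <;> fin_cases l
    exacts [e00, e01, e02, e03, e10, e11, e12, e13, e20, e21, e22, e23, e30, e31, e32, e33]
  rw [hmat]
  apply Polynomial.funext
  intro r
  rw [Matrix.charpoly, det_fin_four']
  simp [Matrix.charmatrix_apply_eq, Matrix.charmatrix_apply_ne]
  ring
end

section
/- Let μ1, μ2, μ3, μ4 be nonzero real numbers. The point (0, 2π/3, π, −2π/3) is a critical point of V if and only if μ1 = μ2 = μ4 (with μ3 arbitrary nonzero). -/
open Real Polynomial

/- ### auxiliary machinery -/

noncomputable def g (x : ℝ) : ℝ := Real.cos x + (1/2) * Real.log (2 - 2 * Real.cos x)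

noncomputable def gd (x : ℝ) : ℝ := -Real.sin x + Real.sin x / (2 - 2 * Real.cos x)

lemma sum3 (f : Fin 4 → ℝ) : ∑ x ∈ ({1,2,3}:Finset (Fin 4)), f x = f 1 + f 2 + f 3 := by
  rw [Finset.sum_insert (by decide), Finset.sum_insert (by decide), Finset.sum_singleton]; ring

lemma sum2 (f : Fin 4 → ℝ) : ∑ x ∈ ({2,3}:Finset (Fin 4)), f x = f 2 + f 3 := by
  rw [Finset.sum_insert (by decide), Finset.sum_singleton]

lemma Vexp (μ θ : Fin 4 → ℝ) : V μ θ =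
    -(μ 0 * μ 1 * g (θ 0 - θ 1) + μ 0 * μ 2 * g (θ 0 - θ 2) + μ 0 * μ 3 * g (θ 0 - θ 3)
      + μ 1 * μ 2 * g (θ 1 - θ 2) + μ 1 * μ 3 * g (θ 1 - θ 3) + μ 2 * μ 3 * g (θ 2 - θ 3)) := by
  have h0 : Finset.Ioi (0:Fin 4) = {1,2,3} := by decide
  have h1 : Finset.Ioi (1:Fin 4) = {2,3} := by decide
  have h2 : Finset.Ioi (2:Fin 4) = {3} := by decide
  have h3 : Finset.Ioi (3:Fin 4) = ∅ := by decide
  simp only [V, Fin.sum_univ_four, h0, h1, h2, h3, g, sum3, sum2,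
    Finset.sum_singleton, Finset.sum_empty]
  ring

lemma hasDerivAt_g {x : ℝ} (h : Real.cos x ≠ 1) : HasDerivAt g (gd x) x := by
  have hne := two_sub_ne h
  have hc : HasDerivAt (fun t => 2 - 2 * Real.cos t) (2 * Real.sin x) x := by
    have := ((Real.hasDerivAt_cos x).const_mul (2:ℝ)).const_sub (2:ℝ)
    rw [show 2 * Real.sin x = -(2 * -Real.sin x) by ring]
    exact this
  have hmain := (Real.hasDerivAt_cos x).add ((hc.log hne).const_mul (1/2 : ℝ))
  have : gd x = -Real.sin x + 1/2 * (2 * Real.sin x / (2 - 2 * Real.cos x)) := by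
    unfold gd
    field_simp
  rw [this]
  exact hmain

lemma hasDerivAt_g_sub (c : ℝ) {x : ℝ} (h : Real.cos (x - c) ≠ 1) :
    HasDerivAt (fun t => g (t - c)) (gd (x - c)) x := by
  have := (hasDerivAt_g h).comp x ((hasDerivAt_id x).sub_const c)
  simpa [Function.comp_def] using this

lemma hasDerivAt_g_const_sub (c : ℝ) {x : ℝ} (h : Real.cos (c - x) ≠ 1) :
    HasDerivAt (fun t => g (c - t)) (-gd (c - x)) x := by
  have := (hasDerivAt_g h).comp x (HasDerivAt.const_sub c (hasDerivAt_id x))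
  simpa [Function.comp_def] using this

/- trig values -/
lemma cos23 : Real.cos (2*π/3) = -(1/2) := by
  rw [show (2*π/3) = π - π/3 by ring, Real.cos_pi_sub, Real.cos_pi_div_three]

lemma sin23 : Real.sin (2*π/3) = Real.sqrt 3 / 2 := by
  rw [show (2*π/3) = π - π/3 by ring, Real.sin_pi_sub, Real.sin_pi_div_three]

lemma cos43 : Real.cos (4*π/3) = -(1/2) := by
  rw [show (4*π/3) = π + π/3 by ring, Real.cos_add]
  simp [Real.cos_pi_div_three]

lemma sin43 : Real.sin (4*π/3) = -(Real.sqrt 3 / 2) := by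
  rw [show (4*π/3) = π + π/3 by ring, Real.sin_add]
  simp [Real.sin_pi_div_three]

lemma cos53 : Real.cos (5*π/3) = 1/2 := by
  rw [show (5*π/3) = π + 2*π/3 by ring, Real.cos_add]
  simp [cos23]

lemma sin53 : Real.sin (5*π/3) = -(Real.sqrt 3 / 2) := by
  rw [show (5*π/3) = π + 2*π/3 by ring, Real.sin_add]
  simp [sin23]

lemma sqrt3_pos : (0:ℝ) < Real.sqrt 3 := Real.sqrt_pos.mpr (by norm_num)

/- gd values -/
lemma gdA : gd (2*π/3) = -(Real.sqrt 3 / 3) := by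
  unfold gd; rw [cos23, sin23]; field_simp; ring

lemma gdB : gd (-(2*π/3)) = Real.sqrt 3 / 3 := by
  unfold gd; rw [Real.cos_neg, Real.sin_neg, cos23, sin23]; field_simp; ring

lemma gdC : gd (-π) = 0 := by
  unfold gd; simp [Real.sin_neg, Real.sin_pi]

lemma gdD : gd (-(π/3)) = 0 := by
  unfold gd
  rw [Real.cos_neg, Real.sin_neg, Real.cos_pi_div_three, Real.sin_pi_div_three]
  norm_num

lemma gdE : gd (4*π/3) = Real.sqrt 3 / 3 := by
  unfold gd; rw [cos43, sin43]; field_simp; ring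

lemma gdF : gd (5*π/3) = 0 := by
  unfold gd; rw [cos53, sin53]; norm_num

/- cos ≠ 1 facts -/
lemma ne23 : Real.cos (2*π/3) ≠ 1 := by rw [cos23]; norm_num
lemma ne23' : Real.cos (-(2*π/3)) ≠ 1 := by rw [Real.cos_neg]; exact ne23
lemma nepi : Real.cos (-π) ≠ 1 := by rw [Real.cos_neg, Real.cos_pi]; norm_num
lemma ne13' : Real.cos (-(π/3)) ≠ 1 := by
  rw [Real.cos_neg, Real.cos_pi_div_three]; norm_num
lemma ne43 : Real.cos (4*π/3) ≠ 1 := by rw [cos43]; norm_num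
lemma ne53 : Real.cos (5*π/3) ≠ 1 := by rw [cos53]; norm_num

/- the θ vector -/
lemma th0 : (![0, 2*π/3, π, -(2*π/3)] : Fin 4 → ℝ) 0 = 0 := rfl
lemma th1 : (![0, 2*π/3, π, -(2*π/3)] : Fin 4 → ℝ) 1 = 2*π/3 := rfl
lemma th2 : (![0, 2*π/3, π, -(2*π/3)] : Fin 4 → ℝ) 2 = π := rfl
lemma th3 : (![0, 2*π/3, π, -(2*π/3)] : Fin 4 → ℝ) 3 = -(2*π/3) := rfl

lemma part0 (μ1 μ2 μ3 μ4 : ℝ) :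
    partialV ![μ1,μ2,μ3,μ4] ![0, 2*π/3, π, -(2*π/3)] 0
      = Real.sqrt 3 / 3 * (μ1*μ4 - μ1*μ2) := by
  have hfun : (fun t => V ![μ1,μ2,μ3,μ4] (Function.update ![0, 2*π/3, π, -(2*π/3)] 0 t)) =
      fun t => -(μ1*μ2 * g (t - 2*π/3) + μ1*μ3 * g (t - π) + μ1*μ4 * g (t - -(2*π/3))
        + μ2*μ3 * g (2*π/3 - π) + μ2*μ4 * g (2*π/3 - -(2*π/3)) + μ3*μ4 * g (π - -(2*π/3))) := by
    funext t
    rw [Vexp]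
    simp [Function.update]
  have d1 : HasDerivAt (fun t => g (t - 2*π/3)) (Real.sqrt 3 / 3) 0 := by
    have h := hasDerivAt_g_sub (2*π/3) (x := 0) (by rw [show (0:ℝ) - 2*π/3 = -(2*π/3) by ring]; exact ne23')
    rw [show (0:ℝ) - 2*π/3 = -(2*π/3) by ring, gdB] at h
    exact h
  have d2 : HasDerivAt (fun t => g (t - π)) (0:ℝ) 0 := by
    have h := hasDerivAt_g_sub π (x := 0) (by rw [show (0:ℝ) - π = -π by ring]; exact nepi)
    rw [show (0:ℝ) - π = -π by ring, gdC] at h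
    exact h
  have d3 : HasDerivAt (fun t => g (t - -(2*π/3))) (-(Real.sqrt 3 / 3)) 0 := by
    have h := hasDerivAt_g_sub (-(2*π/3)) (x := 0) (by rw [show (0:ℝ) - -(2*π/3) = 2*π/3 by ring]; exact ne23)
    rw [show (0:ℝ) - -(2*π/3) = 2*π/3 by ring, gdA] at h
    exact h
  have D : HasDerivAt (fun t => -(μ1*μ2 * g (t - 2*π/3) + μ1*μ3 * g (t - π) + μ1*μ4 * g (t - -(2*π/3))
        + μ2*μ3 * g (2*π/3 - π) + μ2*μ4 * g (2*π/3 - -(2*π/3)) + μ3*μ4 * g (π - -(2*π/3))))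
      (-(μ1*μ2 * (Real.sqrt 3 / 3) + μ1*μ3 * 0 + μ1*μ4 * (-(Real.sqrt 3 / 3)) + 0 + 0 + 0)) 0 := by
    exact ((((((d1.const_mul (μ1*μ2)).add (d2.const_mul (μ1*μ3))).add
      (d3.const_mul (μ1*μ4))).add (hasDerivAt_const 0 _)).add (hasDerivAt_const 0 _)).add
      (hasDerivAt_const 0 _)).neg
  unfold partialV
  rw [hfun, th0, D.deriv]
  ring

lemma hasDerivAt_g_neg {x : ℝ} (h : Real.cos (-x) ≠ 1) :
    HasDerivAt (fun t => g (-t)) (-gd (-x)) x := by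
  have := (hasDerivAt_g h).comp x (hasDerivAt_neg x)
  simpa [Function.comp_def] using this

lemma part1 (μ1 μ2 μ3 μ4 : ℝ) :
    partialV ![μ1,μ2,μ3,μ4] ![0, 2*π/3, π, -(2*π/3)] 1
      = Real.sqrt 3 / 3 * (μ1*μ2 - μ2*μ4) := by
  have hfun : (fun t => V ![μ1,μ2,μ3,μ4] (Function.update ![0, 2*π/3, π, -(2*π/3)] 1 t)) =
      fun t => -(μ1*μ2 * g (-t) + μ1*μ3 * g (0 - π) + μ1*μ4 * g (0 - -(2*π/3))
        + μ2*μ3 * g (t - π) + μ2*μ4 * g (t - -(2*π/3)) + μ3*μ4 * g (π - -(2*π/3))) := by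
    funext t
    rw [Vexp]
    simp [Function.update]
  have d1 : HasDerivAt (fun t => g (-t)) (-(Real.sqrt 3 / 3)) (2*π/3) := by
    have h := hasDerivAt_g_neg (x := 2*π/3) ne23'
    rw [gdB] at h
    exact h
  have d2 : HasDerivAt (fun t => g (t - π)) (0:ℝ) (2*π/3) := by
    have h := hasDerivAt_g_sub π (x := 2*π/3) (by rw [show (2*π/3) - π = -(π/3) by ring]; exact ne13')
    rw [show (2*π/3) - π = -(π/3) by ring, gdD] at h
    exact h
  have d3 : HasDerivAt (fun t => g (t - -(2*π/3))) (Real.sqrt 3 / 3) (2*π/3) := by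
    have h := hasDerivAt_g_sub (-(2*π/3)) (x := 2*π/3) (by rw [show (2*π/3) - -(2*π/3) = 4*π/3 by ring]; exact ne43)
    rw [show (2*π/3) - -(2*π/3) = 4*π/3 by ring, gdE] at h
    exact h
  have D : HasDerivAt (fun t => -(μ1*μ2 * g (-t) + μ1*μ3 * g (0 - π) + μ1*μ4 * g (0 - -(2*π/3))
        + μ2*μ3 * g (t - π) + μ2*μ4 * g (t - -(2*π/3)) + μ3*μ4 * g (π - -(2*π/3))))
      (-(μ1*μ2 * (-(Real.sqrt 3 / 3)) + 0 + 0 + μ2*μ3 * 0 + μ2*μ4 * (Real.sqrt 3 / 3) + 0)) (2*π/3) := by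
    exact ((((((d1.const_mul (μ1*μ2)).add (hasDerivAt_const _ _)).add
      (hasDerivAt_const _ _)).add (d2.const_mul (μ2*μ3))).add (d3.const_mul (μ2*μ4))).add
      (hasDerivAt_const _ _)).neg
  unfold partialV
  rw [hfun, th1, D.deriv]
  ring

lemma part2 (μ1 μ2 μ3 μ4 : ℝ) :
    partialV ![μ1,μ2,μ3,μ4] ![0, 2*π/3, π, -(2*π/3)] 2 = 0 := by
  have hfun : (fun t => V ![μ1,μ2,μ3,μ4] (Function.update ![0, 2*π/3, π, -(2*π/3)] 2 t)) =
      fun t => -(μ1*μ2 * g (0 - 2*π/3) + μ1*μ3 * g (-t) + μ1*μ4 * g (0 - -(2*π/3))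
        + μ2*μ3 * g (2*π/3 - t) + μ2*μ4 * g (2*π/3 - -(2*π/3)) + μ3*μ4 * g (t - -(2*π/3))) := by
    funext t
    rw [Vexp]
    simp [Function.update]
  have d1 : HasDerivAt (fun t => g (-t)) (0:ℝ) π := by
    have h := hasDerivAt_g_neg (x := π) nepi
    rw [gdC] at h
    simpa using h
  have d2 : HasDerivAt (fun t => g (2*π/3 - t)) (0:ℝ) π := by
    have h := hasDerivAt_g_const_sub (2*π/3) (x := π) (by rw [show (2*π/3) - π = -(π/3) by ring]; exact ne13')
    rw [show (2*π/3) - π = -(π/3) by ring, gdD] at h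
    simpa using h
  have d3 : HasDerivAt (fun t => g (t - -(2*π/3))) (0:ℝ) π := by
    have h := hasDerivAt_g_sub (-(2*π/3)) (x := π) (by rw [show π - -(2*π/3) = 5*π/3 by ring]; exact ne53)
    rw [show π - -(2*π/3) = 5*π/3 by ring, gdF] at h
    exact h
  have D : HasDerivAt (fun t => -(μ1*μ2 * g (0 - 2*π/3) + μ1*μ3 * g (-t) + μ1*μ4 * g (0 - -(2*π/3))
        + μ2*μ3 * g (2*π/3 - t) + μ2*μ4 * g (2*π/3 - -(2*π/3)) + μ3*μ4 * g (t - -(2*π/3))))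
      (-(0 + μ1*μ3 * 0 + 0 + μ2*μ3 * 0 + 0 + μ3*μ4 * 0)) π := by
    exact ((((((hasDerivAt_const _ _).add (d1.const_mul (μ1*μ3))).add
      (hasDerivAt_const _ _)).add (d2.const_mul (μ2*μ3))).add (hasDerivAt_const _ _)).add
      (d3.const_mul (μ3*μ4))).neg
  unfold partialV
  rw [hfun, th2, D.deriv]
  ring

lemma part3 (μ1 μ2 μ3 μ4 : ℝ) :
    partialV ![μ1,μ2,μ3,μ4] ![0, 2*π/3, π, -(2*π/3)] 3
      = Real.sqrt 3 / 3 * (μ2*μ4 - μ1*μ4) := by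
  have hfun : (fun t => V ![μ1,μ2,μ3,μ4] (Function.update ![0, 2*π/3, π, -(2*π/3)] 3 t)) =
      fun t => -(μ1*μ2 * g (0 - 2*π/3) + μ1*μ3 * g (0 - π) + μ1*μ4 * g (-t)
        + μ2*μ3 * g (2*π/3 - π) + μ2*μ4 * g (2*π/3 - t) + μ3*μ4 * g (π - t)) := by
    funext t
    rw [Vexp]
    simp [Function.update]
  have d1 : HasDerivAt (fun t => g (-t)) (Real.sqrt 3 / 3) (-(2*π/3)) := by
    have h := hasDerivAt_g_neg (x := -(2*π/3)) (by rw [neg_neg]; exact ne23)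
    rw [neg_neg, gdA] at h
    simpa using h
  have d2 : HasDerivAt (fun t => g (2*π/3 - t)) (-(Real.sqrt 3 / 3)) (-(2*π/3)) := by
    have h := hasDerivAt_g_const_sub (2*π/3) (x := -(2*π/3)) (by rw [show (2*π/3) - -(2*π/3) = 4*π/3 by ring]; exact ne43)
    rw [show (2*π/3) - -(2*π/3) = 4*π/3 by ring, gdE] at h
    exact h
  have d3 : HasDerivAt (fun t => g (π - t)) (0:ℝ) (-(2*π/3)) := by
    have h := hasDerivAt_g_const_sub π (x := -(2*π/3)) (by rw [show π - -(2*π/3) = 5*π/3 by ring]; exact ne53)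
    rw [show π - -(2*π/3) = 5*π/3 by ring, gdF] at h
    simpa using h
  have D : HasDerivAt (fun t => -(μ1*μ2 * g (0 - 2*π/3) + μ1*μ3 * g (0 - π) + μ1*μ4 * g (-t)
        + μ2*μ3 * g (2*π/3 - π) + μ2*μ4 * g (2*π/3 - t) + μ3*μ4 * g (π - t)))
      (-(0 + 0 + μ1*μ4 * (Real.sqrt 3 / 3) + 0 + μ2*μ4 * (-(Real.sqrt 3 / 3)) + μ3*μ4 * 0)) (-(2*π/3)) := by
    exact ((((((hasDerivAt_const _ _).add (hasDerivAt_const _ _)).add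
      (d1.const_mul (μ1*μ4))).add (hasDerivAt_const _ _)).add (d2.const_mul (μ2*μ4))).add
      (d3.const_mul (μ3*μ4))).neg
  unfold partialV
  rw [hfun, th3, D.deriv]
  ring


/-- The kite at `theta2 = 2pi/3` is a critical point of `V` iff
`mu1 = mu2 = mu4`. -/
theorem kite_two_pi_thirds_critical_iff (μ1 μ2 μ3 μ4 : ℝ)
    (h1 : μ1 ≠ 0) (h2 : μ2 ≠ 0) (h3 : μ3 ≠ 0) (h4 : μ4 ≠ 0) :
    IsCriticalPt ![μ1, μ2, μ3, μ4] ![0, 2 * π / 3, π, -(2 * π / 3)] ↔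
      μ1 = μ2 ∧ μ2 = μ4 := by
  constructor
  · intro h
    have hpos : (0:ℝ) < Real.sqrt 3 / 3 := by positivity
    have e0 := h 0
    rw [part0] at e0
    have e1 := h 1
    rw [part1] at e1
    have q0 : μ1*μ4 - μ1*μ2 = 0 := by
      rcases mul_eq_zero.mp e0 with hc | hc
      · exact absurd hc hpos.ne'
      · exact hc
    have q1 : μ1*μ2 - μ2*μ4 = 0 := by
      rcases mul_eq_zero.mp e1 with hc | hc
      · exact absurd hc hpos.ne'
      · exact hc
    have h42 : μ4 = μ2 := by
      have hm : μ1*(μ4-μ2) = 0 := by linarith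
      rcases mul_eq_zero.mp hm with hc | hc
      · exact absurd hc h1
      · linarith
    have h14 : μ1 = μ4 := by
      have hm : μ2*(μ1-μ4) = 0 := by linarith
      rcases mul_eq_zero.mp hm with hc | hc
      · exact absurd hc h2
      · linarith
    exact ⟨by linarith, by linarith⟩
  · rintro ⟨e12, e24⟩
    subst e12
    subst e24
    intro k
    fin_cases k
    · show partialV ![μ1,μ1,μ3,μ1] ![0, 2*π/3, π, -(2*π/3)] 0 = 0
      rw [part0]; ring
    · show partialV ![μ1,μ1,μ3,μ1] ![0, 2*π/3, π, -(2*π/3)] 1 = 0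
      rw [part1]; ring
    · show partialV ![μ1,μ1,μ3,μ1] ![0, 2*π/3, π, -(2*π/3)] 2 = 0
      rw [part2]
    · show partialV ![μ1,μ1,μ3,μ1] ![0, 2*π/3, π, -(2*π/3)] 3 = 0
      rw [part3]; ring
end

section
/- Let μ1, μ3 be real numbers with μ3 > 0 and ((12√70 − 141)/121)·μ3 ≤ μ1 < −μ3/3. Then (−μ1 + 3μ3)/2 > 0, the discriminant 121μ1² + 282μ1μ3 + 81μ3² is nonnegative, and 7μ1 + 3μ3 > √(121μ1² + 282μ1μ3 + 81μ3²); consequently both numbers (7μ1 + 3μ3 ± √(121μ1² + 282μ1μ3 + 81μ3²))/8 are positive. (These are the three nonzero eigenvalues of the weighted Hessian at the kite with θ2 = 2π/3 and μ1 = μ2 = μ4, so such kites are linearly stable for circulations in this range.) -/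
open Real Polynomial

/-- For `mu3 > 0` and `((12*sqrt 70 - 141)/121)*mu3 <= mu1 < -mu3/3`, the
three nonzero eigenvalues of the weighted Hessian at the kite are positive. -/
theorem kite_stability_range (μ1 μ3 : ℝ) (hμ3 : 0 < μ3)
    (hlow : ((12 * Real.sqrt 70 - 141) / 121) * μ3 ≤ μ1)
    (hhigh : μ1 < -μ3 / 3) :
    (-μ1 + 3 * μ3) / 2 > 0 ∧
    0 ≤ 121 * μ1 ^ 2 + 282 * μ1 * μ3 + 81 * μ3 ^ 2 ∧
    7 * μ1 + 3 * μ3 > Real.sqrt (121 * μ1 ^ 2 + 282 * μ1 * μ3 + 81 * μ3 ^ 2) ∧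
    (7 * μ1 + 3 * μ3 + Real.sqrt (121 * μ1 ^ 2 + 282 * μ1 * μ3 + 81 * μ3 ^ 2)) / 8 > 0 ∧
    (7 * μ1 + 3 * μ3 - Real.sqrt (121 * μ1 ^ 2 + 282 * μ1 * μ3 + 81 * μ3 ^ 2)) / 8 > 0 := by
  set s := Real.sqrt 70 with hs
  have hs2 : s ^ 2 = 70 := Real.sq_sqrt (by norm_num)
  have hs8 : (8 : ℝ) ≤ s := by
    rw [hs, show (8:ℝ) = Real.sqrt 64 by rw [show (64:ℝ) = 8^2 by norm_num, Real.sqrt_sq]; norm_num]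
    exact Real.sqrt_le_sqrt (by norm_num)
  have hs9 : s ≤ 9 := by
    rw [hs]
    have := Real.sqrt_le_sqrt (show (70:ℝ) ≤ 81 by norm_num)
    calc Real.sqrt 70 ≤ Real.sqrt 81 := this
      _ = 9 := by rw [show (81:ℝ) = 9^2 by norm_num, Real.sqrt_sq]; norm_num
  -- lower root relation
  have hlow' : (12 * s - 141) * μ3 ≤ 121 * μ1 := by
    have := hlow
    nlinarith [this]
  have h13 : 0 < μ1 + 3 * μ3 := by nlinarith
  have h73 : 0 < 7 * μ1 + 3 * μ3 := by nlinarith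
  have hD : 0 ≤ 121 * μ1 ^ 2 + 282 * μ1 * μ3 + 81 * μ3 ^ 2 := by
    nlinarith [mul_nonneg (sub_nonneg.mpr hlow') (show (0:ℝ) ≤ 121 * μ1 + (12 * s + 141) * μ3 by nlinarith), sq_nonneg μ3]
  set t := Real.sqrt (121 * μ1 ^ 2 + 282 * μ1 * μ3 + 81 * μ3 ^ 2) with ht
  have ht0 : 0 ≤ t := Real.sqrt_nonneg _
  have ht2 : t ^ 2 = 121 * μ1 ^ 2 + 282 * μ1 * μ3 + 81 * μ3 ^ 2 := Real.sq_sqrt hD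
  have hgt : 7 * μ1 + 3 * μ3 > t := by
    nlinarith [mul_pos (show (0:ℝ) < -(3 * μ1 + μ3) by linarith) h13, sq_nonneg (7 * μ1 + 3 * μ3 - t), sq_nonneg (7 * μ1 + 3 * μ3 + t)]
  refine ⟨by nlinarith, hD, hgt, by nlinarith, by nlinarith⟩
end

section
/- Let μ1, μ2, μ3, μ4 be nonzero real numbers and let θ2 ∈ (0, 2π) with θ2 ≠ π. If (0, θ2, π, θ2 + π) is a critical point of V, then either (μ1 = μ3 and μ2 = μ4) or (μ1 = −μ3 and μ2 = −μ4). (In other words, in a rectangular configuration, the circulations of the two pairs of vortices reflected through the origin must both be equal or both be additive inverses.) -/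
open Real Polynomial

noncomputable def f (x : ℝ) : ℝ := Real.cos x + (1/2) * Real.log (2 - 2 * Real.cos x)
noncomputable def D (x : ℝ) : ℝ := -Real.sin x + Real.sin x / (2 - 2 * Real.cos x)

lemma V_expand (μ θ : Fin 4 → ℝ) : V μ θ =
    -(μ 0 * μ 1 * f (θ 0 - θ 1) + μ 0 * μ 2 * f (θ 0 - θ 2) + μ 0 * μ 3 * f (θ 0 - θ 3) +
      μ 1 * μ 2 * f (θ 1 - θ 2) + μ 1 * μ 3 * f (θ 1 - θ 3) + μ 2 * μ 3 * f (θ 2 - θ 3)) := by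
  have h0 : Finset.Ioi (0 : Fin 4) = {1, 2, 3} := by decide
  have h1 : Finset.Ioi (1 : Fin 4) = {2, 3} := by decide
  have h2 : Finset.Ioi (2 : Fin 4) = {3} := by decide
  have h3 : Finset.Ioi (3 : Fin 4) = ∅ := by decide
  simp [V, f, Fin.sum_univ_four, h0, h1, h2, h3, Finset.sum_insert, Finset.sum_singleton]
  ring

lemma hasDerivAt_f {x : ℝ} (h : Real.cos x ≠ 1) : HasDerivAt f (D x) x := by
  have hd : (2 : ℝ) - 2 * Real.cos x ≠ 0 := by
    intro hc; apply h; linarith [hc]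
  have h1 : HasDerivAt (fun x => 2 - 2 * Real.cos x) (2 * Real.sin x) x := by
    simpa using ((Real.hasDerivAt_cos x).const_mul (2:ℝ)).const_sub 2
  have h2 : HasDerivAt (fun x => Real.log (2 - 2 * Real.cos x)) (2 * Real.sin x / (2 - 2 * Real.cos x)) x :=
    h1.log hd
  have := (Real.hasDerivAt_cos x).add (h2.const_mul (1/2 : ℝ))
  convert this using 1
  rfl
  rfl
  rfl
  unfold D
  field_simp

lemma upd (θ : Fin 4 → ℝ) (k : Fin 4) (t : ℝ) (j : Fin 4) (h : j ≠ k) :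
    Function.update θ k t j = θ j := Function.update_of_ne h t θ

lemma pV0 (μ θ : Fin 4 → ℝ) (ha : Real.cos (θ 0 - θ 1) ≠ 1)
    (hb : Real.cos (θ 0 - θ 2) ≠ 1) (hc : Real.cos (θ 0 - θ 3) ≠ 1) :
    deriv (fun t => V μ (Function.update θ 0 t)) (θ 0) =
      -(μ 0 * μ 1 * D (θ 0 - θ 1) + μ 0 * μ 2 * D (θ 0 - θ 2) + μ 0 * μ 3 * D (θ 0 - θ 3)) := by
  have key : ∀ t : ℝ, V μ (Function.update θ 0 t) =
      -(μ 0 * μ 1 * f (t - θ 1) + μ 0 * μ 2 * f (t - θ 2) + μ 0 * μ 3 * f (t - θ 3) +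
        (μ 1 * μ 2 * f (θ 1 - θ 2) + μ 1 * μ 3 * f (θ 1 - θ 3) + μ 2 * μ 3 * f (θ 2 - θ 3))) := by
    intro t
    rw [V_expand]
    simp [Function.update]
    ring
  have hder : HasDerivAt (fun t => V μ (Function.update θ 0 t))
      (-(μ 0 * μ 1 * D (θ 0 - θ 1) + μ 0 * μ 2 * D (θ 0 - θ 2) + μ 0 * μ 3 * D (θ 0 - θ 3))) (θ 0) := by
    have d1 : HasDerivAt (fun t : ℝ => f (t - θ 1)) (D (θ 0 - θ 1)) (θ 0) := by
      simpa [Function.comp_def] using (hasDerivAt_f ha).comp (θ 0) ((hasDerivAt_id (θ 0)).sub_const (θ 1))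
    have d2 : HasDerivAt (fun t : ℝ => f (t - θ 2)) (D (θ 0 - θ 2)) (θ 0) := by
      simpa [Function.comp_def] using (hasDerivAt_f hb).comp (θ 0) ((hasDerivAt_id (θ 0)).sub_const (θ 2))
    have d3 : HasDerivAt (fun t : ℝ => f (t - θ 3)) (D (θ 0 - θ 3)) (θ 0) := by
      simpa [Function.comp_def] using (hasDerivAt_f hc).comp (θ 0) ((hasDerivAt_id (θ 0)).sub_const (θ 3))
    rw [funext key]
    have := ((((d1.const_mul (μ 0 * μ 1)).add (d2.const_mul (μ 0 * μ 2))).add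
        (d3.const_mul (μ 0 * μ 3))).add_const
        (μ 1 * μ 2 * f (θ 1 - θ 2) + μ 1 * μ 3 * f (θ 1 - θ 3) + μ 2 * μ 3 * f (θ 2 - θ 3))).neg
    convert this using 1
    rfl
    rfl
    rfl
  exact hder.deriv

lemma pV1 (μ θ : Fin 4 → ℝ) (ha : Real.cos (θ 0 - θ 1) ≠ 1)
    (hb : Real.cos (θ 1 - θ 2) ≠ 1) (hc : Real.cos (θ 1 - θ 3) ≠ 1) :
    deriv (fun t => V μ (Function.update θ 1 t)) (θ 1) =
      -(μ 0 * μ 1 * -D (θ 0 - θ 1) + μ 1 * μ 2 * D (θ 1 - θ 2) + μ 1 * μ 3 * D (θ 1 - θ 3)) := by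
  have key : ∀ t : ℝ, V μ (Function.update θ 1 t) =
      -(μ 0 * μ 1 * f (θ 0 - t) + μ 1 * μ 2 * f (t - θ 2) + μ 1 * μ 3 * f (t - θ 3) +
        (μ 0 * μ 2 * f (θ 0 - θ 2) + μ 0 * μ 3 * f (θ 0 - θ 3) + μ 2 * μ 3 * f (θ 2 - θ 3))) := by
    intro t
    rw [V_expand]
    simp [Function.update]
    ring
  have d1 : HasDerivAt (fun t : ℝ => f (θ 0 - t)) (-D (θ 0 - θ 1)) (θ 1) := by
    simpa [Function.comp_def] using (hasDerivAt_f ha).comp (θ 1) ((hasDerivAt_id (θ 1)).const_sub (θ 0))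
  have d2 : HasDerivAt (fun t : ℝ => f (t - θ 2)) (D (θ 1 - θ 2)) (θ 1) := by
    simpa [Function.comp_def] using (hasDerivAt_f hb).comp (θ 1) ((hasDerivAt_id (θ 1)).sub_const (θ 2))
  have d3 : HasDerivAt (fun t : ℝ => f (t - θ 3)) (D (θ 1 - θ 3)) (θ 1) := by
    simpa [Function.comp_def] using (hasDerivAt_f hc).comp (θ 1) ((hasDerivAt_id (θ 1)).sub_const (θ 3))
  have hder : HasDerivAt (fun t => V μ (Function.update θ 1 t))
      (-(μ 0 * μ 1 * -D (θ 0 - θ 1) + μ 1 * μ 2 * D (θ 1 - θ 2) + μ 1 * μ 3 * D (θ 1 - θ 3))) (θ 1) := by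
    rw [funext key]
    have := ((((d1.const_mul (μ 0 * μ 1)).add (d2.const_mul (μ 1 * μ 2))).add
        (d3.const_mul (μ 1 * μ 3))).add_const
        (μ 0 * μ 2 * f (θ 0 - θ 2) + μ 0 * μ 3 * f (θ 0 - θ 3) + μ 2 * μ 3 * f (θ 2 - θ 3))).neg
    convert this using 1
    rfl
    rfl
    rfl
  exact hder.deriv

lemma pV2 (μ θ : Fin 4 → ℝ) (ha : Real.cos (θ 0 - θ 2) ≠ 1)
    (hb : Real.cos (θ 1 - θ 2) ≠ 1) (hc : Real.cos (θ 2 - θ 3) ≠ 1) :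
    deriv (fun t => V μ (Function.update θ 2 t)) (θ 2) =
      -(μ 0 * μ 2 * -D (θ 0 - θ 2) + μ 1 * μ 2 * -D (θ 1 - θ 2) + μ 2 * μ 3 * D (θ 2 - θ 3)) := by
  have key : ∀ t : ℝ, V μ (Function.update θ 2 t) =
      -(μ 0 * μ 2 * f (θ 0 - t) + μ 1 * μ 2 * f (θ 1 - t) + μ 2 * μ 3 * f (t - θ 3) +
        (μ 0 * μ 1 * f (θ 0 - θ 1) + μ 0 * μ 3 * f (θ 0 - θ 3) + μ 1 * μ 3 * f (θ 1 - θ 3))) := by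
    intro t
    rw [V_expand]
    simp [Function.update]
    ring
  have d1 : HasDerivAt (fun t : ℝ => f (θ 0 - t)) (-D (θ 0 - θ 2)) (θ 2) := by
    simpa [Function.comp_def] using (hasDerivAt_f ha).comp (θ 2) ((hasDerivAt_id (θ 2)).const_sub (θ 0))
  have d2 : HasDerivAt (fun t : ℝ => f (θ 1 - t)) (-D (θ 1 - θ 2)) (θ 2) := by
    simpa [Function.comp_def] using (hasDerivAt_f hb).comp (θ 2) ((hasDerivAt_id (θ 2)).const_sub (θ 1))
  have d3 : HasDerivAt (fun t : ℝ => f (t - θ 3)) (D (θ 2 - θ 3)) (θ 2) := by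
    simpa [Function.comp_def] using (hasDerivAt_f hc).comp (θ 2) ((hasDerivAt_id (θ 2)).sub_const (θ 3))
  have hder : HasDerivAt (fun t => V μ (Function.update θ 2 t))
      (-(μ 0 * μ 2 * -D (θ 0 - θ 2) + μ 1 * μ 2 * -D (θ 1 - θ 2) + μ 2 * μ 3 * D (θ 2 - θ 3))) (θ 2) := by
    rw [funext key]
    have := ((((d1.const_mul (μ 0 * μ 2)).add (d2.const_mul (μ 1 * μ 2))).add
        (d3.const_mul (μ 2 * μ 3))).add_const
        (μ 0 * μ 1 * f (θ 0 - θ 1) + μ 0 * μ 3 * f (θ 0 - θ 3) + μ 1 * μ 3 * f (θ 1 - θ 3))).neg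
    convert this using 1
    rfl
    rfl
    rfl
  exact hder.deriv

lemma pV3 (μ θ : Fin 4 → ℝ) (ha : Real.cos (θ 0 - θ 3) ≠ 1)
    (hb : Real.cos (θ 1 - θ 3) ≠ 1) (hc : Real.cos (θ 2 - θ 3) ≠ 1) :
    deriv (fun t => V μ (Function.update θ 3 t)) (θ 3) =
      -(μ 0 * μ 3 * -D (θ 0 - θ 3) + μ 1 * μ 3 * -D (θ 1 - θ 3) + μ 2 * μ 3 * -D (θ 2 - θ 3)) := by
  have key : ∀ t : ℝ, V μ (Function.update θ 3 t) =
      -(μ 0 * μ 3 * f (θ 0 - t) + μ 1 * μ 3 * f (θ 1 - t) + μ 2 * μ 3 * f (θ 2 - t) +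
        (μ 0 * μ 1 * f (θ 0 - θ 1) + μ 0 * μ 2 * f (θ 0 - θ 2) + μ 1 * μ 2 * f (θ 1 - θ 2))) := by
    intro t
    rw [V_expand]
    simp [Function.update]
    ring
  have d1 : HasDerivAt (fun t : ℝ => f (θ 0 - t)) (-D (θ 0 - θ 3)) (θ 3) := by
    simpa [Function.comp_def] using (hasDerivAt_f ha).comp (θ 3) ((hasDerivAt_id (θ 3)).const_sub (θ 0))
  have d2 : HasDerivAt (fun t : ℝ => f (θ 1 - t)) (-D (θ 1 - θ 3)) (θ 3) := by
    simpa [Function.comp_def] using (hasDerivAt_f hb).comp (θ 3) ((hasDerivAt_id (θ 3)).const_sub (θ 1))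
  have d3 : HasDerivAt (fun t : ℝ => f (θ 2 - t)) (-D (θ 2 - θ 3)) (θ 3) := by
    simpa [Function.comp_def] using (hasDerivAt_f hc).comp (θ 3) ((hasDerivAt_id (θ 3)).const_sub (θ 2))
  have hder : HasDerivAt (fun t => V μ (Function.update θ 3 t))
      (-(μ 0 * μ 3 * -D (θ 0 - θ 3) + μ 1 * μ 3 * -D (θ 1 - θ 3) + μ 2 * μ 3 * -D (θ 2 - θ 3))) (θ 3) := by
    rw [funext key]
    have := ((((d1.const_mul (μ 0 * μ 3)).add (d2.const_mul (μ 1 * μ 3))).add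
        (d3.const_mul (μ 2 * μ 3))).add_const
        (μ 0 * μ 1 * f (θ 0 - θ 1) + μ 0 * μ 2 * f (θ 0 - θ 2) + μ 1 * μ 2 * f (θ 1 - θ 2))).neg
    convert this using 1
    rfl
    rfl
    rfl
  exact hder.deriv

lemma D_neg (x : ℝ) : D (-x) = -D x := by
  simp only [D, Real.sin_neg, Real.cos_neg]
  ring

lemma D_pi : D π = 0 := by simp [D]

lemma D_sub_pi (x : ℝ) : D (x - π) = D (x + π) := by
  simp only [D, Real.sin_sub, Real.cos_sub, Real.sin_add, Real.cos_add, Real.sin_pi, Real.cos_pi]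
  ring

/-- Rectangles: if `(0, theta2, pi, theta2 + pi)` is a critical point of `V`,
then the circulations of the reflected pairs are both equal or both opposite. -/
theorem rectangle_circulations (μ1 μ2 μ3 μ4 θ2 : ℝ)
    (h1 : μ1 ≠ 0) (h2 : μ2 ≠ 0) (h3 : μ3 ≠ 0) (h4 : μ4 ≠ 0)
    (hθ : θ2 ∈ Set.Ioo (0 : ℝ) (2 * π)) (hθπ : θ2 ≠ π)
    (hcrit : IsCriticalPt ![μ1, μ2, μ3, μ4] ![0, θ2, π, θ2 + π]) :
    (μ1 = μ3 ∧ μ2 = μ4) ∨ (μ1 = -μ3 ∧ μ2 = -μ4) := by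
  have hcrit' : ∀ k : Fin 4, deriv (fun t => V ![μ1, μ2, μ3, μ4]
      (Function.update ![0, θ2, π, θ2 + π] k t)) (![0, θ2, π, θ2 + π] k) = 0 := hcrit
  clear hcrit
  rename' hcrit' => hcrit
  have hs : Real.sin θ2 ≠ 0 := by
    intro hs0
    obtain ⟨n, hn⟩ := Real.sin_eq_zero_iff.mp hs0
    have hp := Real.pi_pos
    have hn0 : (0:ℝ) < n := by nlinarith [hθ.1]
    have hn2 : (n:ℝ) < 2 := by nlinarith [hθ.2]
    have : n = 1 := by
      have := Int.cast_pos.mp hn0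
      have : (n : ℝ) < ((2:ℤ) : ℝ) := by push_cast; linarith
      have := Int.cast_lt.mp this
      omega
    apply hθπ
    rw [← hn, this]; push_cast; ring
  have hc1 : Real.cos θ2 ≠ 1 := by
    intro h
    apply hs
    have := Real.sin_sq_add_cos_sq θ2
    have h2 : Real.sin θ2 ^ 2 = 0 := by nlinarith
    exact pow_eq_zero_iff two_ne_zero |>.mp h2
  have hc2 : Real.cos θ2 ≠ -1 := by
    intro h
    apply hs
    have := Real.sin_sq_add_cos_sq θ2
    have h2 : Real.sin θ2 ^ 2 = 0 := by nlinarith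
    exact pow_eq_zero_iff two_ne_zero |>.mp h2
  have E0 := hcrit 0
  rw [pV0] at E0
  rotate_left
  · simp only [Matrix.cons_val]
    norm_num [Real.cos_sub, Real.cos_add]
    try (intro h; first | exact hc1 (by linarith) | exact hc2 (by linarith))
  · simp only [Matrix.cons_val]
    norm_num [Real.cos_sub, Real.cos_add]
    try (intro h; first | exact hc1 (by linarith) | exact hc2 (by linarith))
  · simp only [Matrix.cons_val]
    norm_num [Real.cos_sub, Real.cos_add]
    try (intro h; first | exact hc1 (by linarith) | exact hc2 (by linarith))
  have E1 := hcrit 1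
  rw [pV1] at E1
  rotate_left
  · simp only [Matrix.cons_val]
    norm_num [Real.cos_sub, Real.cos_add]
    try (intro h; first | exact hc1 (by linarith) | exact hc2 (by linarith))
  · simp only [Matrix.cons_val]
    norm_num [Real.cos_sub, Real.cos_add]
    try (intro h; first | exact hc1 (by linarith) | exact hc2 (by linarith))
  · simp only [Matrix.cons_val]
    norm_num [Real.cos_sub, Real.cos_add]
    try (intro h; first | exact hc1 (by linarith) | exact hc2 (by linarith))
  have E2 := hcrit 2
  rw [pV2] at E2
  rotate_left
  · simp only [Matrix.cons_val]
    norm_num [Real.cos_sub, Real.cos_add]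
    try (intro h; first | exact hc1 (by linarith) | exact hc2 (by linarith))
  · simp only [Matrix.cons_val]
    norm_num [Real.cos_sub, Real.cos_add]
    try (intro h; first | exact hc1 (by linarith) | exact hc2 (by linarith))
  · simp only [Matrix.cons_val]
    norm_num [Real.cos_sub, Real.cos_add]
    try (intro h; first | exact hc1 (by linarith) | exact hc2 (by linarith))
  have E3 := hcrit 3
  rw [pV3] at E3
  rotate_left
  · simp only [Matrix.cons_val]
    norm_num [Real.cos_sub, Real.cos_add]
    try (intro h; first | exact hc1 (by linarith) | exact hc2 (by linarith))
  · simp only [Matrix.cons_val]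
    norm_num [Real.cos_sub, Real.cos_add]
    try (intro h; first | exact hc1 (by linarith) | exact hc2 (by linarith))
  · simp only [Matrix.cons_val]
    norm_num [Real.cos_sub, Real.cos_add]
    try (intro h; first | exact hc1 (by linarith) | exact hc2 (by linarith))
  simp at E0 E1 E2 E3
  simp only [show (-π + -θ2 : ℝ) = -(θ2 + π) by ring, D_neg, D_pi, D_sub_pi, neg_zero,
    mul_zero, zero_mul, neg_neg] at E0 E1 E2 E3
  set a := D θ2 with hA
  set b := D (θ2 + π) with hB
  have hab : ¬(a = 0 ∧ b = 0) := by
    rintro ⟨ha, hb⟩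
    have d1 : 2 - 2 * Real.cos θ2 ≠ 0 := fun h => hc1 (by linarith)
    have d2 : 2 + 2 * Real.cos θ2 ≠ 0 := fun h => hc2 (by linarith)
    rw [hA] at ha
    rw [hB] at hb
    simp only [D, Real.sin_add_pi, Real.cos_add_pi] at ha hb
    have ha' : Real.sin θ2 * (2 * Real.cos θ2 - 1) = 0 := by
      field_simp at ha
      linarith
    have hb' : Real.sin θ2 * (2 * Real.cos θ2 + 1) = 0 := by
      field_simp at hb
      have hu : 1 / (1 - -Real.cos θ2) * (1 - -Real.cos θ2) = 1 :=
        one_div_mul_cancel (fun h => hc2 (by linarith))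
      linear_combination (1 + Real.cos θ2) * hb + Real.sin θ2 * hu
    rcases mul_eq_zero.mp ha' with h | h
    · exact hs h
    rcases mul_eq_zero.mp hb' with h' | h'
    · exact hs h'
    linarith
  have f1 : μ2 * a + μ4 * b = 0 := by
    have h : μ1 * (μ2 * a + μ4 * b) = 0 := by linear_combination E0
    exact (mul_eq_zero.mp h).resolve_left h1
  have f2 : μ1 * a + μ3 * b = 0 := by
    have h : μ2 * (μ1 * a + μ3 * b) = 0 := by linear_combination -E1
    exact (mul_eq_zero.mp h).resolve_left h2
  have f3 : μ2 * b + μ4 * a = 0 := by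
    have h : μ3 * (μ2 * b + μ4 * a) = 0 := by linear_combination E2
    exact (mul_eq_zero.mp h).resolve_left h3
  have f4 : μ1 * b + μ3 * a = 0 := by
    have h : μ4 * (μ1 * b + μ3 * a) = 0 := by linear_combination -E3
    exact (mul_eq_zero.mp h).resolve_left h4
  have hsq : (a - b) * (a + b) = 0 := by
    have h : μ2 * ((a - b) * (a + b)) = 0 := by linear_combination a * f1 - b * f3
    exact (mul_eq_zero.mp h).resolve_left h2
  rcases mul_eq_zero.mp hsq with h | h
  · -- a = b
    have hb' : b = a := by linarith
    have hane : a ≠ 0 := fun h0 => hab ⟨h0, by rw [hb', h0]⟩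
    right
    constructor
    · have : (μ1 + μ3) * a = 0 := by linear_combination f2 + μ3 * h
      rcases mul_eq_zero.mp this with h' | h'
      · linarith
      · exact absurd h' hane
    · have : (μ2 + μ4) * a = 0 := by linear_combination f1 + μ4 * h
      rcases mul_eq_zero.mp this with h' | h'
      · linarith
      · exact absurd h' hane
  · -- a = -b
    have hb' : b = -a := by linarith
    have hane : a ≠ 0 := fun h0 => hab ⟨h0, by rw [hb', h0, neg_zero]⟩
    left
    constructor
    · have : (μ1 - μ3) * a = 0 := by linear_combination f2 - μ3 * h
      rcases mul_eq_zero.mp this with h' | h'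
      · linarith
      · exact absurd h' hane
    · have : (μ2 - μ4) * a = 0 := by linear_combination f1 - μ4 * h
      rcases mul_eq_zero.mp this with h' | h'
      · linarith
      · exact absurd h' hane
end
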